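/- arXiv:2101.01086 — 2 statements merged into one kernel-verified Lean document; each statement's English description precedes it below -/
import Mathlib

section
/- For the Greedy algorithm run on K arms with 1-subgaussian rewards and mean rewards in [0,1], for every ε > 0 and every horizon T ∈ ℕ, the regret satisfies R_T ≤ T·exp(−N_ε·ε²/2) + 3εT + 6K/ε + Σ_{k=1}^K Δ_k, where N_ε is the number of ε-optimal arms. -/
open MeasureTheory ProbabilityTheory Real

/-- Lowest-index maximizer of `f` over `Fin K` (ties broken by lowest index). -/
noncomputable def argmaxLow {K : ℕ} (hK : 0 < K) (f : Fin K → ℝ) : Fin K :=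
  (Finset.univ.filter fun k => ∀ j, f j ≤ f k).min' (by
    obtain ⟨b, -, hb⟩ := Finset.exists_max_image (Finset.univ : Finset (Fin K)) f
      ⟨⟨0, hK⟩, Finset.mem_univ _⟩
    exact ⟨b, Finset.mem_filter.2 ⟨Finset.mem_univ _, fun j => hb j (Finset.mem_univ _)⟩⟩)

/-- Empirical mean of arm `k` given the list `hist` of arms pulled at rounds
`0, 1, …, hist.length - 1`, mean rewards `μ` and realized noise sequence `ω`:
the reward at a round `s` with `hist[s] = k` is `μ k + ω s`. -/
noncomputable def empMean {K : ℕ} (μ : Fin K → ℝ) (ω : ℕ → ℝ) (hist : List (Fin K))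
    (k : Fin K) : ℝ :=
  (∑ s ∈ Finset.range hist.length, if hist[s]? = some k then μ k + ω s else 0) / hist.count k

/-- The next arm pulled by Greedy given the history of pulls: each arm once during the
first `K` rounds, afterwards an arm with maximal empirical mean (lowest index first). -/
noncomputable def greedyNext {K : ℕ} (hK : 0 < K) (μ : Fin K → ℝ) (ω : ℕ → ℝ)
    (hist : List (Fin K)) : Fin K :=
  if h : hist.length < K then ⟨hist.length, h⟩
  else argmaxLow hK (empMean μ ω hist)

/-- History of the arms pulled by Greedy during the first `t` rounds. -/
noncomputable def greedyHist {K : ℕ} (hK : 0 < K) (μ : Fin K → ℝ) (ω : ℕ → ℝ) :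
    ℕ → List (Fin K)
  | 0 => []
  | t + 1 => greedyHist hK μ ω t ++ [greedyNext hK μ ω (greedyHist hK μ ω t)]

/-- The arm pulled by Greedy at round `t` (rounds are 0-indexed). -/
noncomputable def greedyArm {K : ℕ} (hK : 0 < K) (μ : Fin K → ℝ) (ω : ℕ → ℝ) (t : ℕ) : Fin K :=
  greedyNext hK μ ω (greedyHist hK μ ω t)

/-- Best mean reward `μ* = max_k μ_k`. -/
noncomputable def muStar {K : ℕ} (hK : 0 < K) (μ : Fin K → ℝ) : ℝ :=
  Finset.univ.sup' ⟨⟨0, hK⟩, Finset.mem_univ _⟩ μ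

/-- Number of `ε`-optimal arms, i.e. arms `k` with `Δ_k = μ* - μ_k ≤ ε`. -/
noncomputable def nOpt {K : ℕ} (hK : 0 < K) (μ : Fin K → ℝ) (ε : ℝ) : ℕ :=
  (Finset.univ.filter fun k => muStar hK μ - μ k ≤ ε).card

/-- Regret of Greedy over horizon `T`:
`R_T = T·μ* - E[∑_{t=1}^T μ_{A_t}] (= ∑_k Δ_k·E[N_k(T)])`. -/
noncomputable def greedyRegret {Ω : Type*} [MeasurableSpace Ω] (P : Measure Ω)
    {K : ℕ} (hK : 0 < K) (μ : Fin K → ℝ) (η : ℕ → Ω → ℝ) (T : ℕ) : ℝ :=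
  (T : ℝ) * muStar hK μ - ∫ ω, ∑ t ∈ Finset.range T, μ (greedyArm hK μ (fun s => η s ω) t) ∂P

namespace GreedyAux

open Finset

variable {K : ℕ} (hK : 0 < K) (μ : Fin K → ℝ)

lemma argmaxLow_spec (f : Fin K → ℝ) (j : Fin K) : f j ≤ f (argmaxLow hK f) := by
  have h : argmaxLow hK f ∈ Finset.univ.filter fun k => ∀ j, f j ≤ f k := by
    unfold argmaxLow; exact Finset.min'_mem _ _
  exact (Finset.mem_filter.1 h).2 j

lemma argmaxLow_le (f : Fin K → ℝ) (b : Fin K) (hb : ∀ j, f j ≤ f b) :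
    argmaxLow hK f ≤ b := by
  unfold argmaxLow
  exact Finset.min'_le _ _ (Finset.mem_filter.2 ⟨Finset.mem_univ _, hb⟩)

lemma argmaxLow_eq_iff (f : Fin K → ℝ) (a : Fin K) :
    argmaxLow hK f = a ↔ (∀ j, f j ≤ f a) ∧ ∀ b, (∀ j, f j ≤ f b) → a ≤ b := by
  constructor
  · rintro rfl
    exact ⟨argmaxLow_spec hK f, fun b hb => argmaxLow_le hK f b hb⟩
  · rintro ⟨h1, h2⟩
    exact le_antisymm (argmaxLow_le hK f a h1) (h2 _ (argmaxLow_spec hK f))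

/-- Number of pulls of arm `k` during rounds `< t`, as a function of the noise path. -/
noncomputable def cntP (w : ℕ → ℝ) (k : Fin K) (t : ℕ) : ℕ :=
  ((Finset.range t).filter fun s => greedyArm hK μ w s = k).card

/-- Total noise collected by arm `k` during rounds `< t`. -/
noncomputable def sumP (w : ℕ → ℝ) (k : Fin K) (t : ℕ) : ℝ :=
  ∑ s ∈ Finset.range t, if greedyArm hK μ w s = k then w s else 0

lemma hist_eq_map (w : ℕ → ℝ) (t : ℕ) :
    greedyHist hK μ w t = (List.range t).map (greedyArm hK μ w) := by
  induction t with
  | zero => simp [greedyHist]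
  | succ t ih =>
    rw [greedyHist, ih, List.range_succ, List.map_append]
    simp only [List.map_cons, List.map_nil, greedyArm, ih]

lemma length_hist (w : ℕ → ℝ) (t : ℕ) : (greedyHist hK μ w t).length = t := by
  rw [hist_eq_map]; simp

lemma cntP_succ (w : ℕ → ℝ) (k : Fin K) (t : ℕ) :
    cntP hK μ w k (t+1) = cntP hK μ w k t + if greedyArm hK μ w t = k then 1 else 0 := by
  unfold cntP
  rw [Finset.range_add_one, Finset.filter_insert]
  split_ifs with h
  · rw [Finset.card_insert_of_notMem (by simp)]
  · simp

lemma count_hist (w : ℕ → ℝ) (k : Fin K) (t : ℕ) :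
    (greedyHist hK μ w t).count k = cntP hK μ w k t := by
  induction t with
  | zero => simp [greedyHist, cntP]
  | succ t ih =>
    rw [greedyHist, List.count_append, ih, cntP_succ]
    congr 1
    have harm : greedyNext hK μ w (greedyHist hK μ w t) = greedyArm hK μ w t := rfl
    by_cases h : greedyArm hK μ w t = k <;> simp [harm, h, List.count_cons]

lemma arm_early (w : ℕ → ℝ) {t : ℕ} (ht : t < K) : greedyArm hK μ w t = ⟨t, ht⟩ := by
  unfold greedyArm greedyNext
  rw [dif_pos (by rw [length_hist]; exact ht)]
  exact Fin.ext (by simp [length_hist])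

lemma cntP_mono (w : ℕ → ℝ) (k : Fin K) {t t' : ℕ} (h : t ≤ t') :
    cntP hK μ w k t ≤ cntP hK μ w k t' :=
  Finset.card_le_card (Finset.filter_subset_filter _ (Finset.range_subset_range.2 h))

lemma cntP_le (w : ℕ → ℝ) (k : Fin K) (t : ℕ) : cntP hK μ w k t ≤ t :=
  le_trans (Finset.card_filter_le _ _) (by simp)

lemma cntP_pos (w : ℕ → ℝ) (k : Fin K) {t : ℕ} (ht : K ≤ t) : 1 ≤ cntP hK μ w k t := by
  rw [Nat.succ_le_iff, cntP, Finset.card_pos]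
  exact ⟨(k : ℕ), Finset.mem_filter.2 ⟨Finset.mem_range.2 (lt_of_lt_of_le k.isLt ht),
    by rw [arm_early hK μ w k.isLt]⟩⟩

lemma sumP_eq_zero (w : ℕ → ℝ) (k : Fin K) (t : ℕ) (h : cntP hK μ w k t = 0) :
    sumP hK μ w k t = 0 := by
  apply Finset.sum_eq_zero
  intro s hs
  have hne : ¬ (greedyArm hK μ w s = k) := by
    intro h'
    unfold cntP at h
    rw [Finset.card_eq_zero] at h
    have hmem : s ∈ (Finset.range t).filter fun s => greedyArm hK μ w s = k :=
      Finset.mem_filter.2 ⟨hs, h'⟩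
    simp [h] at hmem
  rw [if_neg hne]

lemma empMean_eq (w : ℕ → ℝ) (k : Fin K) (t : ℕ) :
    empMean μ w (greedyHist hK μ w t) k =
      ((cntP hK μ w k t : ℝ) * μ k + sumP hK μ w k t) / (cntP hK μ w k t : ℝ) := by
  unfold empMean
  rw [count_hist, length_hist]
  congr 1
  have hgl : ∀ s ∈ Finset.range t, (greedyHist hK μ w t)[s]? = some (greedyArm hK μ w s) := by
    intro s hs
    rw [hist_eq_map, List.getElem?_map, List.getElem?_range (Finset.mem_range.1 hs), Option.map_some]
  have : ∀ s ∈ Finset.range t,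
      (if (greedyHist hK μ w t)[s]? = some k then μ k + w s else 0) =
        (if greedyArm hK μ w s = k then μ k else 0) +
          (if greedyArm hK μ w s = k then w s else 0) := by
    intro s hs
    rw [hgl s hs]
    by_cases h : greedyArm hK μ w s = k <;> simp [h]
  rw [Finset.sum_congr rfl this, Finset.sum_add_distrib]
  congr 1
  rw [← Finset.sum_filter, Finset.sum_const, cntP, nsmul_eq_mul]

lemma greedy_ge (w : ℕ → ℝ) {t : ℕ} (ht : K ≤ t) (j : Fin K) :
    empMean μ w (greedyHist hK μ w t) j ≤
      empMean μ w (greedyHist hK μ w t) (greedyArm hK μ w t) := by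
  conv_rhs => rw [greedyArm]
  unfold greedyNext
  rw [dif_neg (by rw [length_hist]; omega)]
  exact argmaxLow_spec hK _ j

lemma empMean_congr (w w' : ℕ → ℝ) (l : List (Fin K))
    (h : ∀ s < l.length, w s = w' s) : empMean μ w l = empMean μ w' l := by
  funext k
  unfold empMean
  congr 1
  exact Finset.sum_congr rfl fun s hs => by rw [h s (Finset.mem_range.1 hs)]

lemma greedyNext_congr (w w' : ℕ → ℝ) (l : List (Fin K))
    (h : ∀ s < l.length, w s = w' s) : greedyNext hK μ w l = greedyNext hK μ w' l := by
  unfold greedyNext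
  rw [empMean_congr μ w w' l h]

lemma hist_congr (w w' : ℕ → ℝ) (t : ℕ) (h : ∀ s < t, w s = w' s) :
    greedyHist hK μ w t = greedyHist hK μ w' t := by
  induction t with
  | zero => rfl
  | succ t ih =>
    have ih' := ih fun s hs => h s (hs.trans (Nat.lt_succ_self t))
    rw [greedyHist, greedyHist, ih',
      greedyNext_congr hK μ w w' _ (by
        rw [length_hist]
        exact fun s hs => h s (hs.trans (Nat.lt_succ_self t)))]

lemma arm_congr (w w' : ℕ → ℝ) (t : ℕ) (h : ∀ s < t, w s = w' s) :
    greedyArm hK μ w t = greedyArm hK μ w' t := by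
  unfold greedyArm
  rw [hist_congr hK μ w w' t h,
    greedyNext_congr hK μ w w' _ (by rw [length_hist]; exact h)]

lemma cntP_congr (w w' : ℕ → ℝ) (k : Fin K) (t : ℕ) (h : ∀ s < t, w s = w' s) :
    cntP hK μ w k t = cntP hK μ w' k t := by
  unfold cntP
  congr 1
  apply Finset.filter_congr
  intro s hs
  rw [arm_congr hK μ w w' s fun u hu => h u (hu.trans (Finset.mem_range.1 hs))]

lemma sumP_congr (w w' : ℕ → ℝ) (k : Fin K) (t : ℕ) (h : ∀ s < t, w s = w' s) :
    sumP hK μ w k t = sumP hK μ w' k t := by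
  unfold sumP
  apply Finset.sum_congr rfl
  intro s hs
  rw [arm_congr hK μ w w' s fun u hu => h u (hu.trans (Finset.mem_range.1 hs)),
    h s (Finset.mem_range.1 hs)]

lemma sum_fiber (w : ℕ → ℝ) (T : ℕ) (g : Fin K → ℝ) :
    ∑ t ∈ Finset.range T, g (greedyArm hK μ w t) = ∑ k, g k * (cntP hK μ w k T : ℝ) := by
  rw [← Finset.sum_fiberwise_of_maps_to
    (fun x _ => Finset.mem_univ (greedyArm hK μ w x)) (fun t => g (greedyArm hK μ w t))]
  apply Finset.sum_congr rfl
  intro k _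
  rw [Finset.sum_congr rfl (fun s hs => by rw [(Finset.mem_filter.1 hs).2]),
    Finset.sum_const, cntP, nsmul_eq_mul, mul_comm]

lemma sum_cnt (w : ℕ → ℝ) (T : ℕ) : ∑ k, (cntP hK μ w k T : ℝ) = (T : ℝ) := by
  have := sum_fiber hK μ w T (fun _ => (1 : ℝ))
  simpa using this.symm

end GreedyAux
namespace GreedyAux

open Finset

variable {K : ℕ} (hK : 0 < K) (μ : Fin K → ℝ)

lemma measurable_empMean (l : List (Fin K)) (k : Fin K) :
    Measurable fun w : ℕ → ℝ => empMean μ w l k := by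
  unfold empMean
  apply Measurable.div _ measurable_const
  apply Finset.measurable_sum
  intro s _
  by_cases h : l[s]? = some k
  · simpa [h] using (show Measurable fun w : ℕ → ℝ => μ k + w s from measurable_const.add (measurable_pi_apply s))
  · simpa [h] using (measurable_const : Measurable fun _ : ℕ → ℝ => (0:ℝ))

lemma measurableSet_forall_le (l : List (Fin K)) (b : Fin K) :
    MeasurableSet {w : ℕ → ℝ | ∀ j, empMean μ w l j ≤ empMean μ w l b} := by
  rw [Set.setOf_forall]
  exact MeasurableSet.iInter fun j =>
    measurableSet_le (measurable_empMean μ l j) (measurable_empMean μ l b)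

lemma measurableSet_next (l : List (Fin K)) (a : Fin K) :
    MeasurableSet {w : ℕ → ℝ | greedyNext hK μ w l = a} := by
  unfold greedyNext
  by_cases h : l.length < K
  · simp only [dif_pos h]
    by_cases ha : (⟨l.length, h⟩ : Fin K) = a
    · simp [ha]
    · simp [ha]
  · simp only [dif_neg h]
    have heq : {w : ℕ → ℝ | argmaxLow hK (empMean μ w l) = a} =
        {w : ℕ → ℝ | ∀ j, empMean μ w l j ≤ empMean μ w l a} ∩
          ⋂ b : Fin K, {w : ℕ → ℝ |
            (∀ j, empMean μ w l j ≤ empMean μ w l b) → a ≤ b} := by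
      ext w
      simp only [Set.mem_setOf_eq, Set.mem_inter_iff, Set.mem_iInter, argmaxLow_eq_iff]
    rw [heq]
    apply (measurableSet_forall_le μ l a).inter
    apply MeasurableSet.iInter
    intro b
    by_cases hab : a ≤ b
    · simp [hab]
    · have : {w : ℕ → ℝ | (∀ j, empMean μ w l j ≤ empMean μ w l b) → a ≤ b} =
          {w : ℕ → ℝ | ∀ j, empMean μ w l j ≤ empMean μ w l b}ᶜ := by
        ext w; simp [hab]
      rw [this]
      exact (measurableSet_forall_le μ l b).compl

lemma measurableSet_hist (t : ℕ) (l : List (Fin K)) :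
    MeasurableSet {w : ℕ → ℝ | greedyHist hK μ w t = l} := by
  induction t generalizing l with
  | zero =>
    by_cases h : ([] : List (Fin K)) = l
    · simp only [greedyHist, h]
      simp
    · have : {w : ℕ → ℝ | greedyHist hK μ w 0 = l} = ∅ := by
        ext w
        simp only [greedyHist, Set.mem_setOf_eq, Set.mem_empty_iff_false, iff_false]
        exact h
      rw [this]; exact MeasurableSet.empty
  | succ t ih =>
    have heq : {w : ℕ → ℝ | greedyHist hK μ w (t+1) = l} =
        ⋃ l' : List (Fin K), ⋃ a : Fin K,
          (if l' ++ [a] = l then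
            {w : ℕ → ℝ | greedyHist hK μ w t = l'} ∩
              {w : ℕ → ℝ | greedyNext hK μ w l' = a} else ∅) := by
      ext w
      simp only [Set.mem_iUnion, Set.mem_setOf_eq, greedyHist]
      constructor
      · intro hw
        refine ⟨greedyHist hK μ w t, greedyNext hK μ w (greedyHist hK μ w t), ?_⟩
        rw [if_pos hw]
        exact ⟨rfl, rfl⟩
      · rintro ⟨l', a, hw⟩
        by_cases hla : l' ++ [a] = l
        · rw [if_pos hla] at hw
          obtain ⟨h1, h2⟩ := hw
          rw [Set.mem_setOf_eq] at h1 h2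
          rw [h1, h2]
          exact hla
        · rw [if_neg hla] at hw
          exact absurd hw (Set.notMem_empty w)
    rw [heq]
    apply MeasurableSet.iUnion
    intro l'
    apply MeasurableSet.iUnion
    intro a
    by_cases hla : l' ++ [a] = l
    · rw [if_pos hla]
      exact (ih l').inter (measurableSet_next hK μ l' a)
    · rw [if_neg hla]
      exact MeasurableSet.empty

lemma measurableSet_arm (t : ℕ) (a : Fin K) :
    MeasurableSet {w : ℕ → ℝ | greedyArm hK μ w t = a} := by
  have heq : {w : ℕ → ℝ | greedyArm hK μ w t = a} =
      ⋃ l : List (Fin K),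
        ({w : ℕ → ℝ | greedyHist hK μ w t = l} ∩
          {w : ℕ → ℝ | greedyNext hK μ w l = a}) := by
    ext w
    simp only [Set.mem_iUnion, Set.mem_inter_iff, Set.mem_setOf_eq, greedyArm]
    constructor
    · intro hw
      exact ⟨greedyHist hK μ w t, rfl, hw⟩
    · rintro ⟨l, h1, h2⟩
      rw [h1]; exact h2
  rw [heq]
  exact MeasurableSet.iUnion fun l =>
    (measurableSet_hist hK μ t l).inter (measurableSet_next hK μ l a)

lemma measurable_sumP (k : Fin K) (t : ℕ) :
    Measurable fun w : ℕ → ℝ => sumP hK μ w k t := by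
  unfold sumP
  apply Finset.measurable_sum
  intro s _
  exact Measurable.ite (measurableSet_arm hK μ s k) (measurable_pi_apply s) measurable_const

lemma cntP_cast_eq (w : ℕ → ℝ) (k : Fin K) (t : ℕ) :
    ((cntP hK μ w k t : ℝ)) =
      ∑ s ∈ Finset.range t, if greedyArm hK μ w s = k then (1:ℝ) else 0 := by
  unfold cntP
  rw [Finset.sum_boole]

lemma measurable_cntPR (k : Fin K) (t : ℕ) :
    Measurable fun w : ℕ → ℝ => (cntP hK μ w k t : ℝ) := by
  simp only [cntP_cast_eq hK μ]
  apply Finset.measurable_sum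
  intro s _
  exact Measurable.ite (measurableSet_arm hK μ s k) measurable_const measurable_const

lemma measurableSet_cnt_eq (k : Fin K) (t n : ℕ) :
    MeasurableSet {w : ℕ → ℝ | cntP hK μ w k t = n} := by
  have heq : {w : ℕ → ℝ | cntP hK μ w k t = n} =
      (fun w : ℕ → ℝ => (cntP hK μ w k t : ℝ)) ⁻¹' {(n : ℝ)} := by
    ext w
    simp [Nat.cast_inj]
  rw [heq]
  exact (measurable_cntPR hK μ k t) (measurableSet_singleton _)

end GreedyAux
namespace GreedyAux

open MeasureTheory ProbabilityTheory Real Finset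

variable {Ω : Type*} [MeasurableSpace Ω] {P : Measure Ω} [IsProbabilityMeasure P]

/-- Pad a finite vector into a full path by zeros. -/
noncomputable def pad (t : ℕ) (x : Fin t → ℝ) : ℕ → ℝ := fun u => if h : u < t then x ⟨u, h⟩ else 0

lemma measurable_pad (t : ℕ) : Measurable (pad t) := by
  apply measurable_pi_lambda
  intro u
  by_cases h : u < t
  · simpa [pad, dif_pos h] using measurable_pi_apply (⟨u, h⟩ : Fin t)
  · simpa [pad, dif_neg h] using (measurable_const : Measurable fun _ : Fin t → ℝ => (0:ℝ))

/-- The first `t` noises as a vector. -/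
def vec (η : ℕ → Ω → ℝ) (t : ℕ) : Ω → (Fin t → ℝ) := fun ω i => η i ω

open Classical in
/-- The stopped exponential supermartingale associated to a predictable 0/1 multiplier `C`. -/
noncomputable def mart (η : ℕ → Ω → ℝ) (lam : ℝ) (C : ℕ → Set (ℕ → ℝ)) (t : ℕ) (ω : Ω) : ℝ :=
  Real.exp (∑ s ∈ Finset.range t,
    if (fun u => η u ω) ∈ C s then lam * η s ω - lam^2/2 else 0)

open Classical in
/-- The same functional on the space of finite vectors. -/
noncomputable def martFn (lam : ℝ) (C : ℕ → Set (ℕ → ℝ)) (t : ℕ) (x : Fin t → ℝ) : ℝ :=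
  Real.exp (∑ s ∈ Finset.range t,
    if pad t x ∈ C s then lam * pad t x s - lam^2/2 else 0)

lemma mart_pos (η : ℕ → Ω → ℝ) (lam : ℝ) (C : ℕ → Set (ℕ → ℝ)) (t : ℕ) (ω : Ω) :
    0 < mart η lam C t ω := Real.exp_pos _

lemma measurable_martFn (lam : ℝ) (C : ℕ → Set (ℕ → ℝ)) (hCm : ∀ s, MeasurableSet (C s))
    (t : ℕ) : Measurable (martFn lam C t) := by
  classical
  unfold martFn
  apply Real.measurable_exp.comp
  apply Finset.measurable_sum
  intro s _
  apply Measurable.ite ((measurable_pad t) (hCm s))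
  · exact ((measurable_pad t).eval.const_mul lam).sub measurable_const
  · exact measurable_const

lemma pad_vec_agree (η : ℕ → Ω → ℝ) (t : ℕ) (ω : Ω) {u : ℕ} (hu : u < t) :
    pad t (vec η t ω) u = η u ω := by
  rw [pad, dif_pos hu]; rfl

lemma mart_eq_martFn (η : ℕ → Ω → ℝ) (lam : ℝ) (C : ℕ → Set (ℕ → ℝ))
    (hCdep : ∀ s w w', (∀ u < s, w u = w' u) → (w ∈ C s ↔ w' ∈ C s)) (t : ℕ) (ω : Ω) :
    mart η lam C t ω = martFn lam C t (vec η t ω) := by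
  rw [mart, martFn]
  congr 1
  apply Finset.sum_congr rfl
  intro s hs
  have hst := Finset.mem_range.1 hs
  have hiff : ((fun u => η u ω) ∈ C s) ↔ pad t (vec η t ω) ∈ C s :=
    hCdep s _ _ (fun u hu => (pad_vec_agree η t ω (hu.trans hst)).symm)
  by_cases hmem : (fun u => η u ω) ∈ C s
  · rw [if_pos hmem, if_pos (hiff.1 hmem), pad_vec_agree η t ω hst]
  · rw [if_neg hmem, if_neg (fun hc => hmem (hiff.2 hc))]

lemma mart_integrable_le (η : ℕ → Ω → ℝ) (hmeas : ∀ t, Measurable (η t))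
    (hindep : iIndepFun η P)
    (hint : ∀ t (l : ℝ), Integrable (fun ω => Real.exp (l * η t ω)) P)
    (hsubg : ∀ t (l : ℝ), ∫ ω, Real.exp (l * η t ω) ∂P ≤ Real.exp (l ^ 2 / 2))
    (lam : ℝ) (C : ℕ → Set (ℕ → ℝ)) (hCm : ∀ s, MeasurableSet (C s))
    (hCdep : ∀ s w w', (∀ u < s, w u = w' u) → (w ∈ C s ↔ w' ∈ C s)) (t : ℕ) :
    Integrable (mart η lam C t) P ∧ ∫ ω, mart η lam C t ω ∂P ≤ 1 := by
  classical
  induction t with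
  | zero =>
    constructor
    · have : mart η lam C 0 = fun _ => (1:ℝ) := by
        funext ω; rw [mart]; simp
      rw [this]
      exact integrable_const (1:ℝ)
    · have : mart η lam C 0 = fun _ => (1:ℝ) := by
        funext ω; rw [mart]; simp
      rw [this]
      simp
  | succ t ih =>
    set A : Set Ω := (fun ω => (fun u => η u ω)) ⁻¹' (C t) with hA
    have hAm : MeasurableSet A :=
      (measurable_pi_lambda _ fun u => hmeas u) (hCm t)
    set X1 : Ω → ℝ := Aᶜ.indicator (mart η lam C t) with hX1
    set X2 : Ω → ℝ := A.indicator (mart η lam C t) with hX2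
    set Y : Ω → ℝ := fun ω => Real.exp (lam * η t ω - lam^2/2) with hY
    have hYapp : ∀ ω, Y ω = Real.exp (lam * η t ω - lam^2/2) := fun ω => rfl
    have hsplit : mart η lam C (t+1) = fun ω => X1 ω + X2 ω * Y ω := by
      funext ω
      have h1 : mart η lam C (t+1) ω = mart η lam C t ω *
          Real.exp (if (fun u => η u ω) ∈ C t then lam * η t ω - lam^2/2 else 0) := by
        simp only [mart]
        rw [Finset.sum_range_succ, Real.exp_add]
      rw [h1]
      by_cases hmem : (fun u => η u ω) ∈ C t
      · have hmA : ω ∈ A := hmem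
        rw [if_pos hmem, hX1, hX2, Set.indicator_of_notMem (by simp [hmA]),
          Set.indicator_of_mem hmA, hYapp, zero_add]
      · have hmA : ω ∉ A := hmem
        rw [if_neg hmem, hX1, hX2, Set.indicator_of_mem (by simp [hmA]),
          Set.indicator_of_notMem hmA, Real.exp_zero, zero_mul, add_zero, mul_one]
    have hX1i : Integrable X1 P := (ih.1).indicator hAm.compl
    have hX2i : Integrable X2 P := (ih.1).indicator hAm
    have hYi : Integrable Y P := by
      have hYd : Y = fun ω => Real.exp (lam * η t ω) / Real.exp (lam^2/2) := by
        funext ω; rw [hYapp, Real.exp_sub]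
      rw [hYd]
      exact (hint t lam).div_const _
    -- independence
    have hvecindep : IndepFun (vec η t) (η t) P := by
      have h2 := hindep.indepFun_finset (Finset.range t) {t}
        (Finset.disjoint_singleton_right.2 (by simp)) hmeas
      have h3 : vec η t =
          (fun g : ↥(Finset.range t) → ℝ => fun i : Fin t =>
            g ⟨(i : ℕ), Finset.mem_range.2 i.isLt⟩) ∘
            (fun a (i : ↥(Finset.range t)) => η (i : ℕ) a) := rfl
      have h4 : η t =
          (fun g : ↥({t} : Finset ℕ) → ℝ => g ⟨t, Finset.mem_singleton_self t⟩) ∘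
            (fun a (i : ↥({t} : Finset ℕ)) => η (i : ℕ) a) := rfl
      rw [h3, h4]
      exact h2.comp (measurable_pi_lambda _ fun i => measurable_pi_apply _)
        (measurable_pi_apply _)
    have hX2eq : X2 = ((pad t ⁻¹' C t).indicator (martFn lam C t)) ∘ vec η t := by
      funext ω
      have hiff : ((fun u => η u ω) ∈ C t) ↔ pad t (vec η t ω) ∈ C t :=
        hCdep t _ _ (fun u hu => (pad_vec_agree η t ω hu).symm)
      by_cases hmem : (fun u => η u ω) ∈ C t
      · rw [hX2, Set.indicator_of_mem (show ω ∈ A from hmem), Function.comp_apply,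
          Set.indicator_of_mem (show vec η t ω ∈ pad t ⁻¹' C t from hiff.1 hmem),
          mart_eq_martFn η lam C hCdep]
      · rw [hX2, Set.indicator_of_notMem (show ω ∉ A from hmem), Function.comp_apply,
          Set.indicator_of_notMem
            (show vec η t ω ∉ pad t ⁻¹' C t from fun hc => hmem (hiff.2 hc))]
    have hYeq : Y = (fun r : ℝ => Real.exp (lam * r - lam^2/2)) ∘ η t := rfl
    have hXY : IndepFun X2 Y P := by
      rw [hX2eq, hYeq]
      exact hvecindep.comp
        ((measurable_martFn lam C hCm t).indicator ((measurable_pad t) (hCm t)))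
        (((measurable_const.mul measurable_id).sub measurable_const).exp)
    have hX2Yi : Integrable (X2 * Y) P := hXY.integrable_mul hX2i hYi
    have hX2Yi' : Integrable (fun ω => X2 ω * Y ω) P := hX2Yi
    have hInt : Integrable (mart η lam C (t+1)) P := by
      rw [hsplit]; exact hX1i.add hX2Yi'
    refine ⟨hInt, ?_⟩
    have hYint : ∫ ω, Y ω ∂P ≤ 1 := by
      have hYd : ∫ ω, Y ω ∂P = (∫ ω, Real.exp (lam * η t ω) ∂P) / Real.exp (lam^2/2) := by
        have : Y = fun ω => Real.exp (lam * η t ω) / Real.exp (lam^2/2) := by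
          funext ω; rw [hYapp, Real.exp_sub]
        rw [this, integral_div]
      rw [hYd, div_le_one (Real.exp_pos _)]
      exact hsubg t lam
    have hYnn : 0 ≤ ∫ ω, Y ω ∂P :=
      integral_nonneg fun ω => by rw [hYapp]; exact (Real.exp_pos _).le
    have hX2nn : 0 ≤ ∫ ω, X2 ω ∂P :=
      integral_nonneg fun ω =>
        Set.indicator_nonneg (fun x _ => (mart_pos η lam C t x).le) ω
    have hsum : ∫ ω, X1 ω ∂P + ∫ ω, X2 ω ∂P = ∫ ω, mart η lam C t ω ∂P := by
      rw [← integral_add hX1i hX2i]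
      congr 1
      funext ω
      have hself := Set.indicator_self_add_compl A (mart η lam C t)
      calc X1 ω + X2 ω = X2 ω + X1 ω := by ring
        _ = A.indicator (mart η lam C t) ω + Aᶜ.indicator (mart η lam C t) ω := rfl
        _ = mart η lam C t ω := by rw [← Pi.add_apply, hself]
    have hmul : ∫ ω, X2 ω * Y ω ∂P = (∫ ω, X2 ω ∂P) * ∫ ω, Y ω ∂P :=
      hXY.integral_mul_eq_mul_integral hX2i.aestronglyMeasurable hYi.aestronglyMeasurable
    calc ∫ ω, mart η lam C (t+1) ω ∂P
        = ∫ ω, (X1 ω + X2 ω * Y ω) ∂P := by rw [hsplit]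
      _ = ∫ ω, X1 ω ∂P + ∫ ω, X2 ω * Y ω ∂P := integral_add hX1i hX2Yi'
      _ = ∫ ω, X1 ω ∂P + (∫ ω, X2 ω ∂P) * ∫ ω, Y ω ∂P := by rw [hmul]
      _ ≤ ∫ ω, X1 ω ∂P + (∫ ω, X2 ω ∂P) * 1 := by
          have := mul_le_mul_of_nonneg_left hYint hX2nn
          linarith
      _ = ∫ ω, X1 ω ∂P + ∫ ω, X2 ω ∂P := by ring_nf
      _ = ∫ ω, mart η lam C t ω ∂P := hsum
      _ ≤ 1 := ih.2

lemma mart_markov (η : ℕ → Ω → ℝ) (hmeas : ∀ t, Measurable (η t))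
    (hindep : iIndepFun η P)
    (hint : ∀ t (l : ℝ), Integrable (fun ω => Real.exp (l * η t ω)) P)
    (hsubg : ∀ t (l : ℝ), ∫ ω, Real.exp (l * η t ω) ∂P ≤ Real.exp (l ^ 2 / 2))
    (lam : ℝ) (C : ℕ → Set (ℕ → ℝ)) (hCm : ∀ s, MeasurableSet (C s))
    (hCdep : ∀ s w w', (∀ u < s, w u = w' u) → (w ∈ C s ↔ w' ∈ C s)) (T : ℕ)
    (D : Set Ω) (hD : MeasurableSet D) (a : ℝ) (ha : 0 < a)
    (hbound : ∀ ω ∈ D, a ≤ mart η lam C T ω) :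
    (P D).toReal ≤ a⁻¹ := by
  obtain ⟨hInt, hle⟩ := mart_integrable_le η hmeas hindep hint hsubg lam C hCm hCdep T
  have h2 : ∫ ω, D.indicator (fun _ => a) ω ∂P ≤ ∫ ω, mart η lam C T ω ∂P := by
    apply integral_mono ((integrable_const a).indicator hD) hInt
    intro ω
    by_cases hω : ω ∈ D
    · rw [Set.indicator_of_mem hω]; exact hbound ω hω
    · rw [Set.indicator_of_notMem hω]; exact (mart_pos η lam C T ω).le
  rw [integral_indicator_const a hD, smul_eq_mul] at h2
  have h3 : (P D).toReal * a ≤ 1 := h2.trans hle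
  calc (P D).toReal = ((P D).toReal * a) * a⁻¹ := by field_simp
    _ ≤ 1 * a⁻¹ := mul_le_mul_of_nonneg_right h3 (inv_nonneg.2 ha.le)
    _ = a⁻¹ := one_mul _

end GreedyAux
namespace GreedyAux

open MeasureTheory ProbabilityTheory Real Finset

variable {K : ℕ} (hK : 0 < K) (μ : Fin K → ℝ)

/-- The set of `ε`-optimal arms. -/
noncomputable def Good (ε : ℝ) : Finset (Fin K) :=
  Finset.univ.filter fun k => muStar hK μ - μ k ≤ ε

/-- Arm `j`'s empirical sum has dropped `ε` below its mean at time `u`. -/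
def dropped (w : ℕ → ℝ) (j : Fin K) (u : ℕ) (ε : ℝ) : Prop :=
  sumP hK μ w j u < -(cntP hK μ w j u : ℝ) * ε

/-- All good arms drop at some time before `T`. -/
def Bpath (ε : ℝ) (T : ℕ) : Set (ℕ → ℝ) :=
  {w | ∀ j ∈ Good hK μ ε, ∃ t < T, dropped hK μ w j t ε}

/-- Multiplier event for the drop supermartingale. -/
def CdropSet (ε : ℝ) (s : ℕ) : Set (ℕ → ℝ) :=
  {w | (muStar hK μ - μ (greedyArm hK μ w s) ≤ ε) ∧
    ∀ u ≤ s, ¬ dropped hK μ w (greedyArm hK μ w s) u ε}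

/-- Arm `k`'s `n`-th empirical sum deviates upward by `n δ` at time `u`. -/
def hit (w : ℕ → ℝ) (k : Fin K) (n : ℕ) (δ : ℝ) (u : ℕ) : Prop :=
  cntP hK μ w k u = n ∧ (n : ℝ) * δ ≤ sumP hK μ w k u

/-- The deviation event for arm `k` at count `n`, within horizon `T`. -/
def Dpath (k : Fin K) (n : ℕ) (δ : ℝ) (T : ℕ) : Set (ℕ → ℝ) :=
  {w | ∃ t < T, hit hK μ w k n δ t}

/-- Multiplier event for the deviation supermartingale. -/
def CdevSet (k : Fin K) (n : ℕ) (δ : ℝ) (s : ℕ) : Set (ℕ → ℝ) :=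
  {w | greedyArm hK μ w s = k ∧ cntP hK μ w k s < n ∧ ∀ u ≤ s, ¬ hit hK μ w k n δ u}

lemma measurableSet_const_prop (p : Prop) : MeasurableSet {w : ℕ → ℝ | p} := by
  by_cases h : p
  · simp [h]
  · simp [h]

lemma measurableSet_dropped (j : Fin K) (u : ℕ) (ε : ℝ) :
    MeasurableSet {w : ℕ → ℝ | dropped hK μ w j u ε} :=
  measurableSet_lt (measurable_sumP hK μ j u) ((measurable_cntPR hK μ j u).neg.mul_const ε)

lemma measurableSet_hit (k : Fin K) (n : ℕ) (δ : ℝ) (u : ℕ) :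
    MeasurableSet {w : ℕ → ℝ | hit hK μ w k n δ u} := by
  have heq : {w : ℕ → ℝ | hit hK μ w k n δ u} =
      {w : ℕ → ℝ | cntP hK μ w k u = n} ∩ {w : ℕ → ℝ | (n : ℝ) * δ ≤ sumP hK μ w k u} := rfl
  rw [heq]
  exact (measurableSet_cnt_eq hK μ k u n).inter
    (measurableSet_le measurable_const (measurable_sumP hK μ k u))

lemma measurableSet_Bpath (ε : ℝ) (T : ℕ) : MeasurableSet (Bpath hK μ ε T) := by
  have heq : Bpath hK μ ε T =
      ⋂ j ∈ Good hK μ ε, ⋃ t ∈ Finset.range T, {w : ℕ → ℝ | dropped hK μ w j t ε} := by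
    ext w
    simp only [Bpath, Set.mem_setOf_eq, Set.mem_iInter, Set.mem_iUnion, Finset.mem_range]
    constructor
    · intro h j hj
      obtain ⟨t, ht, hd⟩ := h j hj
      exact ⟨t, ht, hd⟩
    · intro h j hj
      obtain ⟨t, ht, hd⟩ := h j hj
      exact ⟨t, ht, hd⟩
  rw [heq]
  exact MeasurableSet.iInter fun j => MeasurableSet.iInter fun _ =>
    MeasurableSet.iUnion fun t => MeasurableSet.iUnion fun _ =>
      measurableSet_dropped hK μ j t ε

lemma measurableSet_CdropSet (ε : ℝ) (s : ℕ) : MeasurableSet (CdropSet hK μ ε s) := by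
  have heq : CdropSet hK μ ε s =
      ⋃ j : Fin K, ({w : ℕ → ℝ | greedyArm hK μ w s = j} ∩
        ({w : ℕ → ℝ | muStar hK μ - μ j ≤ ε} ∩
          ⋂ u ∈ Finset.range (s+1), {w : ℕ → ℝ | dropped hK μ w j u ε}ᶜ)) := by
    ext w
    simp only [CdropSet, Set.mem_setOf_eq, Set.mem_iUnion, Set.mem_inter_iff, Set.mem_iInter,
      Set.mem_compl_iff, Finset.mem_range, Nat.lt_succ_iff]
    constructor
    · rintro ⟨h1, h2⟩
      exact ⟨greedyArm hK μ w s, rfl, h1, h2⟩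
    · rintro ⟨j, hj, h1, h2⟩
      rw [hj]
      exact ⟨h1, h2⟩
  rw [heq]
  apply MeasurableSet.iUnion
  intro j
  exact (measurableSet_arm hK μ s j).inter ((measurableSet_const_prop _).inter
    (MeasurableSet.iInter fun u => MeasurableSet.iInter fun _ =>
      (measurableSet_dropped hK μ j u ε).compl))

lemma measurableSet_Dpath (k : Fin K) (n : ℕ) (δ : ℝ) (T : ℕ) :
    MeasurableSet (Dpath hK μ k n δ T) := by
  have heq : Dpath hK μ k n δ T =
      ⋃ t ∈ Finset.range T, {w : ℕ → ℝ | hit hK μ w k n δ t} := by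
    ext w
    simp only [Dpath, Set.mem_setOf_eq, Set.mem_iUnion, Finset.mem_range]
    constructor
    · rintro ⟨t, ht, h⟩; exact ⟨t, ht, h⟩
    · rintro ⟨t, ht, h⟩; exact ⟨t, ht, h⟩
  rw [heq]
  exact MeasurableSet.iUnion fun t => MeasurableSet.iUnion fun _ =>
    measurableSet_hit hK μ k n δ t

lemma measurableSet_cnt_lt (k : Fin K) (s n : ℕ) :
    MeasurableSet {w : ℕ → ℝ | cntP hK μ w k s < n} := by
  have heq : {w : ℕ → ℝ | cntP hK μ w k s < n} =
      {w : ℕ → ℝ | (cntP hK μ w k s : ℝ) < (n : ℝ)} := by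
    ext w; simp [Nat.cast_lt]
  rw [heq]
  exact measurableSet_lt (measurable_cntPR hK μ k s) measurable_const

lemma measurableSet_CdevSet (k : Fin K) (n : ℕ) (δ : ℝ) (s : ℕ) :
    MeasurableSet (CdevSet hK μ k n δ s) := by
  have heq : CdevSet hK μ k n δ s =
      {w : ℕ → ℝ | greedyArm hK μ w s = k} ∩ ({w : ℕ → ℝ | cntP hK μ w k s < n} ∩
        ⋂ u ∈ Finset.range (s+1), {w : ℕ → ℝ | hit hK μ w k n δ u}ᶜ) := by
    ext w
    simp only [CdevSet, Set.mem_setOf_eq, Set.mem_inter_iff, Set.mem_iInter,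
      Set.mem_compl_iff, Finset.mem_range, Nat.lt_succ_iff]
  rw [heq]
  exact (measurableSet_arm hK μ s k).inter ((measurableSet_cnt_lt hK μ k s n).inter
    (MeasurableSet.iInter fun u => MeasurableSet.iInter fun _ =>
      (measurableSet_hit hK μ k n δ u).compl))

lemma dropped_congr (w w' : ℕ → ℝ) (j : Fin K) (u : ℕ) (ε : ℝ)
    (h : ∀ v < u, w v = w' v) : dropped hK μ w j u ε ↔ dropped hK μ w' j u ε := by
  unfold dropped
  rw [sumP_congr hK μ w w' j u h, cntP_congr hK μ w w' j u h]

lemma hit_congr (w w' : ℕ → ℝ) (k : Fin K) (n : ℕ) (δ : ℝ) (u : ℕ)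
    (h : ∀ v < u, w v = w' v) : hit hK μ w k n δ u ↔ hit hK μ w' k n δ u := by
  unfold hit
  rw [sumP_congr hK μ w w' k u h, cntP_congr hK μ w w' k u h]

lemma CdropSet_congr (ε : ℝ) (s : ℕ) (w w' : ℕ → ℝ) (h : ∀ u < s, w u = w' u) :
    (w ∈ CdropSet hK μ ε s ↔ w' ∈ CdropSet hK μ ε s) := by
  unfold CdropSet
  rw [Set.mem_setOf_eq, Set.mem_setOf_eq, arm_congr hK μ w w' s h]
  constructor
  · rintro ⟨h1, h2⟩
    refine ⟨h1, fun u hu hd => h2 u hu ?_⟩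
    rw [dropped_congr hK μ w w' _ u ε fun v hv => h v (hv.trans_le hu)]
    exact hd
  · rintro ⟨h1, h2⟩
    refine ⟨h1, fun u hu hd => h2 u hu ?_⟩
    rw [← dropped_congr hK μ w w' _ u ε fun v hv => h v (hv.trans_le hu)]
    exact hd

lemma CdevSet_congr (k : Fin K) (n : ℕ) (δ : ℝ) (s : ℕ) (w w' : ℕ → ℝ)
    (h : ∀ u < s, w u = w' u) :
    (w ∈ CdevSet hK μ k n δ s ↔ w' ∈ CdevSet hK μ k n δ s) := by
  unfold CdevSet
  rw [Set.mem_setOf_eq, Set.mem_setOf_eq, arm_congr hK μ w w' s h,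
    cntP_congr hK μ w w' k s h]
  constructor
  · rintro ⟨h1, h2, h3⟩
    refine ⟨h1, h2, fun u hu hd => h3 u hu ?_⟩
    rw [hit_congr hK μ w w' k n δ u fun v hv => h v (hv.trans_le hu)]
    exact hd
  · rintro ⟨h1, h2, h3⟩
    refine ⟨h1, h2, fun u hu hd => h3 u hu ?_⟩
    rw [← hit_congr hK μ w w' k n δ u fun v hv => h v (hv.trans_le hu)]
    exact hd

lemma cntP_pos_of_dropped (w : ℕ → ℝ) (j : Fin K) (u : ℕ) {ε : ℝ} (hε : 0 < ε)
    (hd : dropped hK μ w j u ε) : 1 ≤ cntP hK μ w j u := by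
  rcases Nat.eq_zero_or_pos (cntP hK μ w j u) with h | h
  · exfalso
    unfold dropped at hd
    rw [sumP_eq_zero hK μ w j u h, h] at hd
    norm_num at hd
  · exact h

open Classical in
/-- Pathwise lower bound on the exponent of the drop supermartingale on `Bpath`. -/
lemma drop_exponent {ε : ℝ} (hε : 0 < ε) (T : ℕ) (w : ℕ → ℝ) (hw : w ∈ Bpath hK μ ε T) :
    ((Good hK μ ε).card : ℝ) * (ε^2/2) ≤
      ∑ s ∈ Finset.range T, if w ∈ CdropSet hK μ ε s then (-ε) * w s - (-ε)^2/2 else 0 := by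
  classical
  -- first drop times
  have hex : ∀ j ∈ Good hK μ ε, ∃ t, dropped hK μ w j t ε := by
    intro j hj
    obtain ⟨t, _, hd⟩ := hw j hj
    exact ⟨t, hd⟩
  -- rewrite sum fiberwise over the pulled arm
  rw [← Finset.sum_fiberwise_of_maps_to
    (fun s _ => Finset.mem_univ (greedyArm hK μ w s))
    (fun s => if w ∈ CdropSet hK μ ε s then (-ε) * w s - (-ε)^2/2 else 0)]
  have hzero : ∀ j ∈ (Finset.univ : Finset (Fin K)), j ∉ Good hK μ ε →
      (∑ s ∈ (Finset.range T).filter (fun s => greedyArm hK μ w s = j),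
        if w ∈ CdropSet hK μ ε s then (-ε) * w s - (-ε)^2/2 else 0) = 0 := by
    intro j _ hj
    apply Finset.sum_eq_zero
    intro s hs
    rw [if_neg]
    intro hC
    apply hj
    rw [Good, Finset.mem_filter]
    refine ⟨Finset.mem_univ _, ?_⟩
    have := hC.1
    rwa [(Finset.mem_filter.1 hs).2] at this
  rw [← Finset.sum_subset (Finset.subset_univ (Good hK μ ε)) hzero]
  -- per-arm lower bound
  have hbound : ∀ j ∈ Good hK μ ε,
      ε^2/2 ≤ ∑ s ∈ (Finset.range T).filter (fun s => greedyArm hK μ w s = j),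
        if w ∈ CdropSet hK μ ε s then (-ε) * w s - (-ε)^2/2 else 0 := by
    intro j hj
    have hjgood : muStar hK μ - μ j ≤ ε := (Finset.mem_filter.1 hj).2
    set σ : ℕ := Nat.find (hex j hj) with hσ
    have hσdrop : dropped hK μ w j σ ε := Nat.find_spec (hex j hj)
    have hσmin : ∀ u < σ, ¬ dropped hK μ w j u ε := fun u hu => Nat.find_min (hex j hj) hu
    have hσlt : σ < T := by
      obtain ⟨t, ht, hd⟩ := hw j hj
      exact lt_of_le_of_lt (Nat.find_min' (hex j hj) hd) ht
    -- identify the terms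
    have hterm : ∀ s ∈ (Finset.range T).filter (fun s => greedyArm hK μ w s = j),
        (if w ∈ CdropSet hK μ ε s then (-ε) * w s - (-ε)^2/2 else 0) =
          (if s < σ then (-ε) * w s - (-ε)^2/2 else 0) := by
      intro s hs
      have harm : greedyArm hK μ w s = j := (Finset.mem_filter.1 hs).2
      by_cases hlt : s < σ
      · rw [if_pos hlt, if_pos]
        refine ⟨by rw [harm]; exact hjgood, ?_⟩
        intro u hu
        rw [harm]
        exact hσmin u (lt_of_le_of_lt hu hlt)
      · rw [if_neg hlt, if_neg]
        intro hC
        apply hlt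
        by_contra h2
        push_neg at h2
        exact (hC.2 σ h2) (by rw [harm]; exact hσdrop)
    rw [Finset.sum_congr rfl hterm, ← Finset.sum_filter]
    have hseteq : ((Finset.range T).filter (fun s => greedyArm hK μ w s = j)).filter
        (fun s => s < σ) = (Finset.range σ).filter (fun s => greedyArm hK μ w s = j) := by
      ext s
      simp only [Finset.mem_filter, Finset.mem_range]
      constructor
      · rintro ⟨⟨_, h2⟩, h3⟩; exact ⟨h3, h2⟩
      · rintro ⟨h1, h2⟩; exact ⟨⟨h1.trans hσlt, h2⟩, h1⟩
    rw [hseteq]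
    have hsum : ∑ s ∈ (Finset.range σ).filter (fun s => greedyArm hK μ w s = j),
        ((-ε) * w s - (-ε)^2/2) =
          (-ε) * sumP hK μ w j σ - (ε^2/2) * (cntP hK μ w j σ : ℝ) := by
      rw [Finset.sum_sub_distrib, ← Finset.mul_sum, Finset.sum_const, sumP,
        ← Finset.sum_filter, cntP, nsmul_eq_mul]
      ring
    rw [hsum]
    have hc1 : 1 ≤ cntP hK μ w j σ := cntP_pos_of_dropped hK μ w j σ hε hσdrop
    have hc1' : (1:ℝ) ≤ (cntP hK μ w j σ : ℝ) := by exact_mod_cast hc1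
    have hdrop' : sumP hK μ w j σ < -(cntP hK μ w j σ : ℝ) * ε := hσdrop
    nlinarith [sq_nonneg ε, hdrop', hc1', hε]
  calc ((Good hK μ ε).card : ℝ) * (ε^2/2)
      = ∑ _j ∈ Good hK μ ε, ε^2/2 := by rw [Finset.sum_const, nsmul_eq_mul]
    _ ≤ _ := Finset.sum_le_sum hbound

open Classical in
/-- Pathwise lower bound on the exponent of the deviation supermartingale on `Dpath`. -/
lemma dev_exponent (k : Fin K) (n : ℕ) {δ : ℝ} (hδ : 0 < δ) (T : ℕ) (w : ℕ → ℝ)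
    (hw : w ∈ Dpath hK μ k n δ T) :
    (n : ℝ) * δ^2/2 ≤
      ∑ s ∈ Finset.range T, if w ∈ CdevSet hK μ k n δ s then δ * w s - δ^2/2 else 0 := by
  classical
  have hex : ∃ t, hit hK μ w k n δ t := by
    obtain ⟨t, _, h⟩ := hw; exact ⟨t, h⟩
  set τ : ℕ := Nat.find hex with hτ
  have hτhit : hit hK μ w k n δ τ := Nat.find_spec hex
  have hτmin : ∀ u < τ, ¬ hit hK μ w k n δ u := fun u hu => Nat.find_min hex hu
  have hτlt : τ < T := by
    obtain ⟨t, ht, h⟩ := hw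
    exact lt_of_le_of_lt (Nat.find_min' hex h) ht
  have hcond : ∀ s, (w ∈ CdevSet hK μ k n δ s) ↔
      (greedyArm hK μ w s = k ∧ s < τ) := by
    intro s
    constructor
    · rintro ⟨h1, h2, h3⟩
      refine ⟨h1, ?_⟩
      by_contra h4
      push_neg at h4
      exact (h3 τ h4) hτhit
    · rintro ⟨h1, h2⟩
      refine ⟨h1, ?_, fun u hu => hτmin u (lt_of_le_of_lt hu h2)⟩
      have hstep : cntP hK μ w k s + 1 ≤ cntP hK μ w k τ := by
        have h5 : cntP hK μ w k (s+1) = cntP hK μ w k s + 1 := by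
          rw [cntP_succ, if_pos h1]
        rw [← h5]
        exact cntP_mono hK μ w k h2
      rw [hτhit.1] at hstep
      omega
  have hterm : ∀ s ∈ Finset.range T,
      (if w ∈ CdevSet hK μ k n δ s then δ * w s - δ^2/2 else 0) =
        (if greedyArm hK μ w s = k ∧ s < τ then δ * w s - δ^2/2 else 0) := by
    intro s _
    by_cases h : w ∈ CdevSet hK μ k n δ s
    · rw [if_pos h, if_pos ((hcond s).1 h)]
    · rw [if_neg h, if_neg (fun hc => h ((hcond s).2 hc))]
  rw [Finset.sum_congr rfl hterm, ← Finset.sum_filter]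
  have hseteq : (Finset.range T).filter (fun s => greedyArm hK μ w s = k ∧ s < τ) =
      (Finset.range τ).filter (fun s => greedyArm hK μ w s = k) := by
    ext s
    simp only [Finset.mem_filter, Finset.mem_range]
    constructor
    · rintro ⟨_, h2, h3⟩; exact ⟨h3, h2⟩
    · rintro ⟨h1, h2⟩; exact ⟨h1.trans hτlt, h2, h1⟩
  rw [hseteq]
  have hsum : ∑ s ∈ (Finset.range τ).filter (fun s => greedyArm hK μ w s = k),
      (δ * w s - δ^2/2) = δ * sumP hK μ w k τ - (δ^2/2) * (cntP hK μ w k τ : ℝ) := by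
    rw [Finset.sum_sub_distrib, ← Finset.mul_sum, Finset.sum_const, sumP,
      ← Finset.sum_filter, cntP, nsmul_eq_mul]
    ring
  rw [hsum, hτhit.1]
  have hge : (n : ℝ) * δ ≤ sumP hK μ w k τ := hτhit.2
  nlinarith [hge, hδ]

end GreedyAux
namespace GreedyAux

open MeasureTheory ProbabilityTheory Real Finset

variable {K : ℕ} (hK : 0 < K) (μ : Fin K → ℝ)

/-- The set of `3ε`-bad arms. -/
noncomputable def Bad (ε : ℝ) : Finset (Fin K) :=
  Finset.univ.filter fun k => 3*ε < muStar hK μ - μ k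

lemma le_muStar (k : Fin K) : μ k ≤ muStar hK μ := Finset.le_sup' μ (Finset.mem_univ k)

lemma muStar_le_one (hμ : ∀ k, μ k ∈ Set.Icc (0:ℝ) 1) : muStar hK μ ≤ 1 :=
  Finset.sup'_le _ _ fun k _ => (hμ k).2

lemma gap_nonneg (k : Fin K) : 0 ≤ muStar hK μ - μ k := by
  have := le_muStar hK μ k; linarith

lemma gap_le_one (hμ : ∀ k, μ k ∈ Set.Icc (0:ℝ) 1) (k : Fin K) :
    muStar hK μ - μ k ≤ 1 := by
  have h1 := muStar_le_one hK μ hμ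
  have h2 := (hμ k).1
  linarith

/-- If arm `k` is pulled at a round `K ≤ t < T` and some good arm never dropped,
then arm `k`'s empirical sum deviates. -/
lemma pull_deviation {ε : ℝ} (hε : 0 < ε) {T : ℕ} (w : ℕ → ℝ)
    {j : Fin K} (hj : j ∈ Good hK μ ε) (hnd : ∀ t < T, ¬ dropped hK μ w j t ε)
    {t : ℕ} (hKt : K ≤ t) (htT : t < T) :
    (muStar hK μ - μ (greedyArm hK μ w t) - 2*ε) * (cntP hK μ w (greedyArm hK μ w t) t : ℝ)
      ≤ sumP hK μ w (greedyArm hK μ w t) t := by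
  set a := greedyArm hK μ w t with ha
  have hcntj : (1:ℝ) ≤ (cntP hK μ w j t : ℝ) := by exact_mod_cast cntP_pos hK μ w j hKt
  have hcnta : (1:ℝ) ≤ (cntP hK μ w a t : ℝ) := by exact_mod_cast cntP_pos hK μ w a hKt
  have hcntjpos : (0:ℝ) < (cntP hK μ w j t : ℝ) := lt_of_lt_of_le one_pos hcntj
  have hcntapos : (0:ℝ) < (cntP hK μ w a t : ℝ) := lt_of_lt_of_le one_pos hcnta
  have hndt : ¬ dropped hK μ w j t ε := hnd t htT
  unfold dropped at hndt
  push_neg at hndt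
  -- empirical mean of j is at least μ j - ε
  have hempj : μ j - ε ≤ empMean μ w (greedyHist hK μ w t) j := by
    rw [empMean_eq, le_div_iff₀ hcntjpos]
    nlinarith [hndt]
  have hjgood : muStar hK μ - μ j ≤ ε := (Finset.mem_filter.1 hj).2
  have hcomp := greedy_ge hK μ w hKt j
  rw [← ha] at hcomp
  have hempa : muStar hK μ - 2*ε ≤ empMean μ w (greedyHist hK μ w t) a := by
    have : μ j - ε ≤ empMean μ w (greedyHist hK μ w t) a := le_trans hempj hcomp
    linarith
  rw [empMean_eq, le_div_iff₀ hcntapos] at hempa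
  nlinarith [hempa]

lemma cnt_split (w : ℕ → ℝ) (k : Fin K) (T : ℕ) :
    cntP hK μ w k T ≤ 1 +
      (((Finset.range T).filter fun s => greedyArm hK μ w s = k).filter fun s => K ≤ s).card := by
  classical
  set A := (Finset.range T).filter fun s => greedyArm hK μ w s = k with hA
  have hsplit : A = (A.filter fun s => K ≤ s) ∪ (A.filter fun s => ¬ K ≤ s) :=
    (Finset.filter_union_filter_not_eq _ A).symm
  have hXcard : (A.filter fun s => ¬ K ≤ s).card ≤ 1 := by
    apply Finset.card_le_one.2
    intro s hs s' hs'
    simp only [Finset.mem_filter, hA, Finset.mem_range, not_le] at hs hs'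
    have h1 : greedyArm hK μ w s = k := hs.1.2
    have h2 : greedyArm hK μ w s' = k := hs'.1.2
    rw [arm_early hK μ w hs.2] at h1
    rw [arm_early hK μ w hs'.2] at h2
    have : (⟨s, hs.2⟩ : Fin K) = ⟨s', hs'.2⟩ := h1.trans h2.symm
    exact congrArg Fin.val this
  have hcards : (A.filter fun s => K ≤ s).card + (A.filter fun s => ¬ K ≤ s).card
      = A.card := Finset.card_filter_add_card_filter_not _
  calc cntP hK μ w k T = A.card := rfl
    _ ≤ 1 + (A.filter fun s => K ≤ s).card := by omega

open Classical in
/-- On the complement of `Bpath`, the pulls of a bad arm inject into deviation events. -/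
lemma pulls_le_dev {ε : ℝ} (hε : 0 < ε) {T : ℕ} (w : ℕ → ℝ)
    {j : Fin K} (hj : j ∈ Good hK μ ε) (hnd : ∀ t < T, ¬ dropped hK μ w j t ε)
    (k : Fin K) :
    ((((Finset.range T).filter fun s => greedyArm hK μ w s = k).filter
        fun s => K ≤ s).card : ℝ) ≤
      ∑ n ∈ Finset.Icc 1 T,
        (if w ∈ Dpath hK μ k n (muStar hK μ - μ k - 2*ε) T then (1:ℝ) else 0) := by
  classical
  set J := (((Finset.range T).filter fun s => greedyArm hK μ w s = k).filter
    fun s => K ≤ s) with hJ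
  have hmemJ : ∀ s ∈ J, s < T ∧ greedyArm hK μ w s = k ∧ K ≤ s := by
    intro s hs
    simp only [hJ, Finset.mem_filter, Finset.mem_range] at hs
    exact ⟨hs.1.1, hs.1.2, hs.2⟩
  have hmono : ∀ s ∈ J, ∀ s' ∈ J, s < s' → cntP hK μ w k s < cntP hK μ w k s' := by
    intro s hs s' hs' hlt
    have h1 : cntP hK μ w k (s+1) = cntP hK μ w k s + 1 := by
      rw [cntP_succ, if_pos (hmemJ s hs).2.1]
    have h2 : cntP hK μ w k (s+1) ≤ cntP hK μ w k s' := cntP_mono hK μ w k hlt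
    omega
  have hinj : Set.InjOn (fun s => cntP hK μ w k s) J := by
    intro s hs s' hs' heq
    rcases lt_trichotomy s s' with h | h | h
    · exact absurd heq (Nat.ne_of_lt (hmono s hs s' hs' h))
    · exact h
    · exact absurd heq.symm (Nat.ne_of_lt (hmono s' hs' s hs h))
  have himage : J.image (fun s => cntP hK μ w k s) ⊆
      (Finset.Icc 1 T).filter fun n =>
        w ∈ Dpath hK μ k n (muStar hK μ - μ k - 2*ε) T := by
    intro n hn
    obtain ⟨s, hs, rfl⟩ := Finset.mem_image.1 hn
    obtain ⟨hsT, harm, hKs⟩ := hmemJ s hs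
    refine Finset.mem_filter.2 ⟨Finset.mem_Icc.2 ⟨cntP_pos hK μ w k hKs, ?_⟩, ?_⟩
    · exact le_trans (cntP_le hK μ w k s) (le_of_lt hsT)
    · refine ⟨s, hsT, rfl, ?_⟩
      have := pull_deviation hK μ hε w hj hnd hKs hsT
      rw [harm] at this
      calc ((cntP hK μ w k s : ℕ) : ℝ) * (muStar hK μ - μ k - 2*ε)
          = (muStar hK μ - μ k - 2*ε) * (cntP hK μ w k s : ℝ) := by ring
        _ ≤ sumP hK μ w k s := this
  have hcard : J.card ≤ ((Finset.Icc 1 T).filter fun n =>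
      w ∈ Dpath hK μ k n (muStar hK μ - μ k - 2*ε) T).card := by
    rw [← Finset.card_image_of_injOn hinj]
    exact Finset.card_le_card himage
  have hsum : (((Finset.Icc 1 T).filter fun n =>
      w ∈ Dpath hK μ k n (muStar hK μ - μ k - 2*ε) T).card : ℝ) =
      ∑ n ∈ Finset.Icc 1 T,
        (if w ∈ Dpath hK μ k n (muStar hK μ - μ k - 2*ε) T then (1:ℝ) else 0) := by
    rw [Finset.sum_boole]
  calc (J.card : ℝ) ≤ _ := by exact_mod_cast hcard
    _ = _ := hsum

open Classical in
/-- The master pathwise regret inequality. -/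
lemma master (hμ : ∀ k, μ k ∈ Set.Icc (0:ℝ) 1) {ε : ℝ} (hε : 0 < ε) (T : ℕ) (w : ℕ → ℝ) :
    ∑ t ∈ Finset.range T, (muStar hK μ - μ (greedyArm hK μ w t)) ≤
      (if w ∈ Bpath hK μ ε T then (T:ℝ) else 0) + 3*ε*T + (∑ k, (muStar hK μ - μ k)) +
      ∑ k ∈ Bad hK μ ε, (muStar hK μ - μ k) *
        ∑ n ∈ Finset.Icc 1 T,
          (if w ∈ Dpath hK μ k n (muStar hK μ - μ k - 2*ε) T then (1:ℝ) else 0) := by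
  classical
  have hfib := sum_fiber hK μ w T (fun k => muStar hK μ - μ k)
  rw [hfib]
  have hindnonneg : ∀ k ∈ Bad hK μ ε, 0 ≤ (muStar hK μ - μ k) *
      ∑ n ∈ Finset.Icc 1 T,
        (if w ∈ Dpath hK μ k n (muStar hK μ - μ k - 2*ε) T then (1:ℝ) else 0) := by
    intro k _
    apply mul_nonneg (gap_nonneg hK μ k)
    apply Finset.sum_nonneg
    intro n _
    split_ifs <;> norm_num
  have hlast : 0 ≤ ∑ k ∈ Bad hK μ ε, (muStar hK μ - μ k) *
      ∑ n ∈ Finset.Icc 1 T,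
        (if w ∈ Dpath hK μ k n (muStar hK μ - μ k - 2*ε) T then (1:ℝ) else 0) :=
    Finset.sum_nonneg hindnonneg
  have hgapsum : 0 ≤ ∑ k, (muStar hK μ - μ k) :=
    Finset.sum_nonneg fun k _ => gap_nonneg hK μ k
  have hT3 : 0 ≤ 3*ε*T := by positivity
  by_cases hB : w ∈ Bpath hK μ ε T
  · rw [if_pos hB]
    have hbound : ∑ k, (muStar hK μ - μ k) * (cntP hK μ w k T : ℝ) ≤ (T:ℝ) := by
      calc ∑ k, (muStar hK μ - μ k) * (cntP hK μ w k T : ℝ)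
          ≤ ∑ k, 1 * (cntP hK μ w k T : ℝ) := by
            apply Finset.sum_le_sum
            intro k _
            exact mul_le_mul_of_nonneg_right (gap_le_one hK μ hμ k) (Nat.cast_nonneg _)
        _ = ∑ k, (cntP hK μ w k T : ℝ) := by simp
        _ = (T:ℝ) := sum_cnt hK μ w T
    linarith
  · rw [if_neg hB]
    simp only [Bpath, Set.mem_setOf_eq] at hB
    push_neg at hB
    obtain ⟨j, hj, hnd⟩ := hB
    have hnd' : ∀ t < T, ¬ dropped hK μ w j t ε := fun t ht hd => by
      have := hnd t ht
      exact this hd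
    -- split into bad and non-bad arms
    rw [← Finset.sum_filter_add_sum_filter_not Finset.univ
      (fun k => 3*ε < muStar hK μ - μ k)
      (fun k => (muStar hK μ - μ k) * (cntP hK μ w k T : ℝ))]
    have hnotbad : ∑ k ∈ Finset.univ.filter (fun k => ¬ (3*ε < muStar hK μ - μ k)),
        (muStar hK μ - μ k) * (cntP hK μ w k T : ℝ) ≤ 3*ε*T := by
      calc ∑ k ∈ Finset.univ.filter (fun k => ¬ (3*ε < muStar hK μ - μ k)),
            (muStar hK μ - μ k) * (cntP hK μ w k T : ℝ)
          ≤ ∑ k ∈ Finset.univ.filter (fun k => ¬ (3*ε < muStar hK μ - μ k)),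
            (3*ε) * (cntP hK μ w k T : ℝ) := by
            apply Finset.sum_le_sum
            intro k hk
            have hk2 : ¬ (3*ε < muStar hK μ - μ k) := (Finset.mem_filter.1 hk).2
            push_neg at hk2
            exact mul_le_mul_of_nonneg_right hk2 (Nat.cast_nonneg _)
        _ ≤ ∑ k, (3*ε) * (cntP hK μ w k T : ℝ) := by
            apply Finset.sum_le_sum_of_subset_of_nonneg (Finset.filter_subset _ _)
            intro k _ _
            have : (0:ℝ) ≤ (cntP hK μ w k T : ℝ) := Nat.cast_nonneg _
            positivity
        _ = (3*ε) * ∑ k, (cntP hK μ w k T : ℝ) := by rw [Finset.mul_sum]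
        _ = 3*ε*T := by rw [sum_cnt hK μ w T]
    have hbad : ∑ k ∈ Bad hK μ ε, (muStar hK μ - μ k) * (cntP hK μ w k T : ℝ) ≤
        (∑ k, (muStar hK μ - μ k)) +
          ∑ k ∈ Bad hK μ ε, (muStar hK μ - μ k) *
            ∑ n ∈ Finset.Icc 1 T,
              (if w ∈ Dpath hK μ k n (muStar hK μ - μ k - 2*ε) T then (1:ℝ) else 0) := by
      have hstep : ∀ k ∈ Bad hK μ ε,
          (muStar hK μ - μ k) * (cntP hK μ w k T : ℝ) ≤
            (muStar hK μ - μ k) * (1 + ∑ n ∈ Finset.Icc 1 T,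
              (if w ∈ Dpath hK μ k n (muStar hK μ - μ k - 2*ε) T then (1:ℝ) else 0)) := by
        intro k _
        apply mul_le_mul_of_nonneg_left _ (gap_nonneg hK μ k)
        have h1 := cnt_split hK μ w k T
        have h2 := pulls_le_dev hK μ hε w hj hnd' k
        have h1' : (cntP hK μ w k T : ℝ) ≤ 1 +
            ((((Finset.range T).filter fun s => greedyArm hK μ w s = k).filter
              fun s => K ≤ s).card : ℝ) := by exact_mod_cast h1
        linarith
      calc ∑ k ∈ Bad hK μ ε, (muStar hK μ - μ k) * (cntP hK μ w k T : ℝ)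
          ≤ ∑ k ∈ Bad hK μ ε, (muStar hK μ - μ k) * (1 + ∑ n ∈ Finset.Icc 1 T,
              (if w ∈ Dpath hK μ k n (muStar hK μ - μ k - 2*ε) T then (1:ℝ) else 0)) :=
            Finset.sum_le_sum hstep
        _ = ∑ k ∈ Bad hK μ ε, ((muStar hK μ - μ k) + (muStar hK μ - μ k) *
              ∑ n ∈ Finset.Icc 1 T,
                (if w ∈ Dpath hK μ k n (muStar hK μ - μ k - 2*ε) T then (1:ℝ) else 0)) := by
            apply Finset.sum_congr rfl
            intro k _
            ring
        _ = (∑ k ∈ Bad hK μ ε, (muStar hK μ - μ k)) +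
              ∑ k ∈ Bad hK μ ε, (muStar hK μ - μ k) *
                ∑ n ∈ Finset.Icc 1 T,
                  (if w ∈ Dpath hK μ k n (muStar hK μ - μ k - 2*ε) T then (1:ℝ) else 0) :=
            Finset.sum_add_distrib
        _ ≤ _ := by
            have : ∑ k ∈ Bad hK μ ε, (muStar hK μ - μ k) ≤ ∑ k, (muStar hK μ - μ k) :=
              Finset.sum_le_sum_of_subset_of_nonneg (Finset.subset_univ _)
                (fun k _ _ => gap_nonneg hK μ k)
            linarith
    have heqBad : Finset.univ.filter (fun k => 3*ε < muStar hK μ - μ k) = Bad hK μ ε := rfl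
    rw [heqBad]
    linarith

end GreedyAux
namespace GreedyAux

open MeasureTheory ProbabilityTheory Real Finset

lemma geom_bound {x : ℝ} (hx : 0 < x) (T : ℕ) :
    ∑ n ∈ Finset.Icc 1 T, (Real.exp (-x)) ^ n ≤ 1 / x := by
  set r := Real.exp (-x) with hr
  have hr0 : 0 < r := Real.exp_pos _
  have hr1 : r < 1 := by
    rw [hr]
    exact Real.exp_lt_one_iff.2 (by linarith)
  have h3 : 0 < 1 - r := by linarith
  have hgeom : ∑ n ∈ Finset.Icc 1 T, r ^ n = r * ∑ i ∈ Finset.range T, r ^ i := by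
    rw [← Finset.Ico_add_one_right_eq_Icc, Finset.sum_Ico_eq_sum_range]
    try simp only [Nat.add_sub_cancel]
    rw [Finset.mul_sum]
    apply Finset.sum_congr rfl
    intro i _
    rw [pow_add, pow_one]
  have hsum : ∑ i ∈ Finset.range T, r ^ i ≤ 1 / (1 - r) := by
    have h1 := geom_sum_mul r T
    have h2 : 0 ≤ r^T := le_of_lt (pow_pos hr0 T)
    rw [le_div_iff₀ h3]
    nlinarith
  have h4 : r * Real.exp x = 1 := by
    rw [hr, ← Real.exp_add]
    simp
  have hfinal : r * (1/(1-r)) ≤ 1/x := by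
    rw [mul_one_div, div_le_div_iff₀ h3 hx]
    have h5 := Real.add_one_le_exp x
    nlinarith
  calc ∑ n ∈ Finset.Icc 1 T, r ^ n = r * ∑ i ∈ Finset.range T, r ^ i := hgeom
    _ ≤ r * (1/(1-r)) := mul_le_mul_of_nonneg_left hsum hr0.le
    _ ≤ 1 / x := hfinal

end GreedyAux

open GreedyAux in
theorem greedy_generic_bound'
    {Ω : Type*} [MeasurableSpace Ω] (P : Measure Ω) [IsProbabilityMeasure P]
    {K : ℕ} (hK : 0 < K) (T : ℕ)
    (μ : Fin K → ℝ) (hμ : ∀ k, μ k ∈ Set.Icc (0 : ℝ) 1)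
    (η : ℕ → Ω → ℝ) (hmeas : ∀ t, Measurable (η t))
    (hindep : iIndepFun η P)
    (hident : ∀ s t, IdentDistrib (η s) (η t) P P)
    (hint : ∀ t (l : ℝ), Integrable (fun ω => Real.exp (l * η t ω)) P)
    (hsubg : ∀ t (l : ℝ), ∫ ω, Real.exp (l * η t ω) ∂P ≤ Real.exp (l ^ 2 / 2))
    (ε : ℝ) (hε : 0 < ε) :
    greedyRegret P hK μ η T ≤
      (T : ℝ) * Real.exp (-(nOpt hK μ ε : ℝ) * ε ^ 2 / 2) + 3 * ε * T + 6 * K / ε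
        + ∑ k, (muStar hK μ - μ k) := by
  classical
  -- the path map
  have hphim : Measurable fun ω : Ω => (fun s => η s ω) :=
    measurable_pi_lambda _ fun s => hmeas s
  -- events
  set Bev : Set Ω := (fun ω : Ω => (fun s => η s ω)) ⁻¹' (Bpath hK μ ε T) with hBev
  have hBevm : MeasurableSet Bev := hphim (measurableSet_Bpath hK μ ε T)
  set Dev : Fin K → ℕ → Set Ω := fun k n =>
    (fun ω : Ω => (fun s => η s ω)) ⁻¹' (Dpath hK μ k n (muStar hK μ - μ k - 2*ε) T)
    with hDev
  have hDevm : ∀ k n, MeasurableSet (Dev k n) := fun k n =>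
    hphim (measurableSet_Dpath hK μ k n _ T)
  -- probability bound for the drop event
  have hPB : (P Bev).toReal ≤ Real.exp (-(nOpt hK μ ε : ℝ) * ε ^ 2 / 2) := by
    have hm := mart_markov (P := P) η hmeas hindep hint hsubg (-ε) (CdropSet hK μ ε)
      (fun s => measurableSet_CdropSet hK μ ε s)
      (fun s w w' h => CdropSet_congr hK μ ε s w w' h) T Bev hBevm
      (Real.exp (((Good hK μ ε).card : ℝ) * (ε^2/2))) (Real.exp_pos _)
      (by
        intro ω hω
        have hexp := drop_exponent hK μ hε T (fun s => η s ω) hω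
        calc Real.exp (((Good hK μ ε).card : ℝ) * (ε^2/2))
            ≤ Real.exp (∑ s ∈ Finset.range T,
                if (fun u => η u ω) ∈ CdropSet hK μ ε s
                  then (-ε) * η s ω - (-ε)^2/2 else 0) := Real.exp_le_exp.2 hexp
          _ = mart η (-ε) (CdropSet hK μ ε) T ω := rfl)
    rw [← Real.exp_neg] at hm
    have hcard : ((Good hK μ ε).card : ℝ) = (nOpt hK μ ε : ℝ) := rfl
    calc (P Bev).toReal ≤ Real.exp (-(((Good hK μ ε).card : ℝ) * (ε^2/2))) := hm
      _ = Real.exp (-(nOpt hK μ ε : ℝ) * ε ^ 2 / 2) := by rw [hcard]; ring_nf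
  -- probability bound for the deviation events
  have hPD : ∀ k ∈ Bad hK μ ε, ∀ n ∈ Finset.Icc 1 T,
      (P (Dev k n)).toReal ≤ Real.exp (-((muStar hK μ - μ k - 2*ε)^2/2)) ^ n := by
    intro k hk n _
    have hδpos : 0 < muStar hK μ - μ k - 2*ε := by
      have := (Finset.mem_filter.1 hk).2
      linarith
    have hm := mart_markov (P := P) η hmeas hindep hint hsubg
      (muStar hK μ - μ k - 2*ε) (CdevSet hK μ k n (muStar hK μ - μ k - 2*ε))
      (fun s => measurableSet_CdevSet hK μ k n _ s)
      (fun s w w' h => CdevSet_congr hK μ k n _ s w w' h) T (Dev k n) (hDevm k n)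
      (Real.exp ((n : ℝ) * (muStar hK μ - μ k - 2*ε)^2/2)) (Real.exp_pos _)
      (by
        intro ω hω
        have hexp := dev_exponent hK μ k n hδpos T (fun s => η s ω) hω
        calc Real.exp ((n : ℝ) * (muStar hK μ - μ k - 2*ε)^2/2)
            ≤ Real.exp (∑ s ∈ Finset.range T,
                if (fun u => η u ω) ∈ CdevSet hK μ k n (muStar hK μ - μ k - 2*ε) s
                  then (muStar hK μ - μ k - 2*ε) * η s ω
                    - (muStar hK μ - μ k - 2*ε)^2/2 else 0) := Real.exp_le_exp.2 hexp
          _ = mart η (muStar hK μ - μ k - 2*ε)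
                (CdevSet hK μ k n (muStar hK μ - μ k - 2*ε)) T ω := rfl)
    rw [← Real.exp_neg] at hm
    calc (P (Dev k n)).toReal
        ≤ Real.exp (-((n : ℝ) * (muStar hK μ - μ k - 2*ε)^2/2)) := hm
      _ = Real.exp ((n : ℝ) * (-((muStar hK μ - μ k - 2*ε)^2/2))) := by ring_nf
      _ = Real.exp (-((muStar hK μ - μ k - 2*ε)^2/2)) ^ n := Real.exp_nat_mul _ n
  -- per bad arm bound
  have hperk : ∀ k ∈ Bad hK μ ε,
      (muStar hK μ - μ k) * ∑ n ∈ Finset.Icc 1 T, (P (Dev k n)).toReal ≤ 6/ε := by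
    intro k hk
    have hΔ : 3*ε < muStar hK μ - μ k := (Finset.mem_filter.1 hk).2
    have hδpos : 0 < muStar hK μ - μ k - 2*ε := by linarith
    have hxpos : 0 < (muStar hK μ - μ k - 2*ε)^2/2 := by positivity
    have hsum1 : ∑ n ∈ Finset.Icc 1 T, (P (Dev k n)).toReal ≤
        1 / ((muStar hK μ - μ k - 2*ε)^2/2) := by
      calc ∑ n ∈ Finset.Icc 1 T, (P (Dev k n)).toReal
          ≤ ∑ n ∈ Finset.Icc 1 T,
            Real.exp (-((muStar hK μ - μ k - 2*ε)^2/2)) ^ n :=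
            Finset.sum_le_sum (hPD k hk)
        _ ≤ 1 / ((muStar hK μ - μ k - 2*ε)^2/2) := geom_bound hxpos T
    have hnn : 0 ≤ muStar hK μ - μ k := gap_nonneg hK μ k
    calc (muStar hK μ - μ k) * ∑ n ∈ Finset.Icc 1 T, (P (Dev k n)).toReal
        ≤ (muStar hK μ - μ k) * (1 / ((muStar hK μ - μ k - 2*ε)^2/2)) :=
          mul_le_mul_of_nonneg_left hsum1 hnn
      _ ≤ 6/ε := by
          rw [mul_one_div, div_le_div_iff₀ hxpos hε]
          nlinarith [sq_nonneg (muStar hK μ - μ k - 3*ε), hε, hΔ]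
  -- sum over bad arms
  have hbadsum : ∑ k ∈ Bad hK μ ε,
      (muStar hK μ - μ k) * ∑ n ∈ Finset.Icc 1 T, (P (Dev k n)).toReal ≤ 6*K/ε := by
    calc ∑ k ∈ Bad hK μ ε,
        (muStar hK μ - μ k) * ∑ n ∈ Finset.Icc 1 T, (P (Dev k n)).toReal
        ≤ (Bad hK μ ε).card • (6/ε) := Finset.sum_le_card_nsmul _ _ _ hperk
      _ = ((Bad hK μ ε).card : ℝ) * (6/ε) := nsmul_eq_mul _ _
      _ ≤ (K : ℝ) * (6/ε) := by
          apply mul_le_mul_of_nonneg_right _ (by positivity)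
          have h1 : (Bad hK μ ε).card ≤ Fintype.card (Fin K) := Finset.card_le_univ _
          rw [Fintype.card_fin] at h1
          exact_mod_cast h1
      _ = 6*K/ε := by ring
  -- measurability of the reward process
  have harmmeas : ∀ (t : ℕ) (k : Fin K),
      MeasurableSet {ω : Ω | greedyArm hK μ (fun s => η s ω) t = k} := fun t k =>
    hphim (measurableSet_arm hK μ t k)
  have hgmeas_t : ∀ t : ℕ,
      Measurable fun ω : Ω => μ (greedyArm hK μ (fun s => η s ω) t) := by
    intro t
    have heq : (fun ω : Ω => μ (greedyArm hK μ (fun s => η s ω) t)) =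
        fun ω : Ω => ∑ j, if greedyArm hK μ (fun s => η s ω) t = j then μ j else 0 := by
      funext ω
      rw [Finset.sum_ite_eq Finset.univ (greedyArm hK μ (fun s => η s ω) t) μ,
        if_pos (Finset.mem_univ _)]
    rw [heq]
    apply Finset.measurable_sum
    intro j _
    exact Measurable.ite (harmmeas t j) measurable_const measurable_const
  set g : Ω → ℝ := fun ω => ∑ t ∈ Finset.range T, μ (greedyArm hK μ (fun s => η s ω) t)
    with hg
  have hgmeas : Measurable g := Finset.measurable_sum _ fun t _ => hgmeas_t t
  have hgbound : ∀ ω, ‖g ω‖ ≤ (T:ℝ) := by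
    intro ω
    rw [Real.norm_eq_abs, abs_of_nonneg
      (Finset.sum_nonneg fun t _ => (hμ _).1)]
    calc (∑ t ∈ Finset.range T, μ (greedyArm hK μ (fun s => η s ω) t))
        ≤ (Finset.range T).card • (1:ℝ) :=
          Finset.sum_le_card_nsmul _ _ _ fun t _ => (hμ _).2
      _ = (T:ℝ) := by simp
  have hgint : Integrable g P := by
    apply Integrable.mono' (integrable_const (T:ℝ)) hgmeas.aestronglyMeasurable
    exact Filter.Eventually.of_forall hgbound
  -- F and its integral
  set F : Ω → ℝ := fun ω => ∑ t ∈ Finset.range T,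
    (muStar hK μ - μ (greedyArm hK μ (fun s => η s ω) t)) with hF
  have hFeq : F = fun ω => (T:ℝ) * muStar hK μ - g ω := by
    funext ω
    show (∑ t ∈ Finset.range T, (muStar hK μ - μ (greedyArm hK μ (fun s => η s ω) t)))
      = (T:ℝ) * muStar hK μ - ∑ t ∈ Finset.range T, μ (greedyArm hK μ (fun s => η s ω) t)
    rw [Finset.sum_sub_distrib, Finset.sum_const, Finset.card_range, nsmul_eq_mul]
  have hFint : Integrable F P := by
    rw [hFeq]
    exact (integrable_const _).sub hgint
  have hreg : greedyRegret P hK μ η T = ∫ ω, F ω ∂P := by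
    rw [greedyRegret]
    rw [show (∫ ω, F ω ∂P) = ∫ ω, ((T:ℝ) * muStar hK μ - g ω) ∂P by rw [hFeq]]
    rw [integral_sub (integrable_const _) hgint, integral_const]
    simp [measure_univ]; rfl
  -- G and the pointwise bound
  set G : Ω → ℝ := fun ω =>
    (if ω ∈ Bev then (T:ℝ) else 0) + 3*ε*T + (∑ k, (muStar hK μ - μ k)) +
      ∑ k ∈ Bad hK μ ε, (muStar hK μ - μ k) *
        ∑ n ∈ Finset.Icc 1 T, (if ω ∈ Dev k n then (1:ℝ) else 0) with hG
  have hFG : ∀ ω, F ω ≤ G ω := by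
    intro ω
    exact master hK μ hμ hε T (fun s => η s ω)
  -- integrability of G
  have hind1 : Integrable (fun ω => if ω ∈ Bev then (T:ℝ) else 0) P := by
    have : (fun ω => if ω ∈ Bev then (T:ℝ) else 0) =
        Bev.indicator (fun _ => (T:ℝ)) := by
      funext ω
      by_cases hω : ω ∈ Bev
      · rw [if_pos hω, Set.indicator_of_mem hω]
      · rw [if_neg hω, Set.indicator_of_notMem hω]
    rw [this]
    exact (integrable_const _).indicator hBevm
  have hint1 : ∫ ω, (if ω ∈ Bev then (T:ℝ) else 0) ∂P = (P Bev).toReal * T := by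
    have h1 : (fun ω => if ω ∈ Bev then (T:ℝ) else 0) =
        Bev.indicator (fun _ => (T:ℝ)) := by
      funext ω
      by_cases hω : ω ∈ Bev
      · rw [if_pos hω, Set.indicator_of_mem hω]
      · rw [if_neg hω, Set.indicator_of_notMem hω]
    rw [h1, integral_indicator_const _ hBevm, smul_eq_mul, measureReal_def]
  have hind2 : ∀ k n, Integrable (fun ω => if ω ∈ Dev k n then (1:ℝ) else 0) P := by
    intro k n
    have : (fun ω => if ω ∈ Dev k n then (1:ℝ) else 0) =
        (Dev k n).indicator (fun _ => (1:ℝ)) := by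
      funext ω
      by_cases hω : ω ∈ Dev k n
      · rw [if_pos hω, Set.indicator_of_mem hω]
      · rw [if_neg hω, Set.indicator_of_notMem hω]
    rw [this]
    exact (integrable_const _).indicator (hDevm k n)
  have hint2 : ∀ k n, ∫ ω, (if ω ∈ Dev k n then (1:ℝ) else 0) ∂P
      = (P (Dev k n)).toReal := by
    intro k n
    have h1 : (fun ω => if ω ∈ Dev k n then (1:ℝ) else 0) =
        (Dev k n).indicator (fun _ => (1:ℝ)) := by
      funext ω
      by_cases hω : ω ∈ Dev k n
      · rw [if_pos hω, Set.indicator_of_mem hω]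
      · rw [if_neg hω, Set.indicator_of_notMem hω]
    rw [h1, integral_indicator_const _ (hDevm k n), smul_eq_mul, mul_one, measureReal_def]
  have hind3 : ∀ k : Fin K, Integrable (fun ω => (muStar hK μ - μ k) *
      ∑ n ∈ Finset.Icc 1 T, (if ω ∈ Dev k n then (1:ℝ) else 0)) P := by
    intro k
    exact ((integrable_finset_sum _ fun n _ => hind2 k n).const_mul _)
  have hDint : Integrable (fun ω => ∑ k ∈ Bad hK μ ε, (muStar hK μ - μ k) *
      ∑ n ∈ Finset.Icc 1 T, (if ω ∈ Dev k n then (1:ℝ) else 0)) P :=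
    integrable_finset_sum _ fun k _ => hind3 k
  have hGint : Integrable G P := by
    rw [hG]
    exact ((hind1.add (integrable_const _)).add (integrable_const _)).add hDint
  have hABi : Integrable (fun ω => (if ω ∈ Bev then (T:ℝ) else 0) + 3*ε*T) P := by
    exact hind1.add (integrable_const _)
  have hABCi : Integrable (fun ω => (if ω ∈ Bev then (T:ℝ) else 0) + 3*ε*T +
      (∑ k, (muStar hK μ - μ k))) P := by
    exact hABi.add (integrable_const _)
  have hterm : ∀ k ∈ Bad hK μ ε, (∫ ω, (muStar hK μ - μ k) *
      ∑ n ∈ Finset.Icc 1 T, (if ω ∈ Dev k n then (1:ℝ) else 0) ∂P) =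
      (muStar hK μ - μ k) * ∑ n ∈ Finset.Icc 1 T, (P (Dev k n)).toReal := by
    intro k _
    rw [MeasureTheory.integral_const_mul, integral_finset_sum _ fun n _ => hind2 k n]
    congr 1
    exact Finset.sum_congr rfl fun n _ => hint2 k n
  have hGval : ∫ ω, G ω ∂P = (P Bev).toReal * T + 3*ε*T + (∑ k, (muStar hK μ - μ k)) +
      ∑ k ∈ Bad hK μ ε, (muStar hK μ - μ k) *
        ∑ n ∈ Finset.Icc 1 T, (P (Dev k n)).toReal := by
    calc ∫ ω, G ω ∂P
        = ∫ ω, ((if ω ∈ Bev then (T:ℝ) else 0) + 3*ε*T + (∑ k, (muStar hK μ - μ k)) +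
            ∑ k ∈ Bad hK μ ε, (muStar hK μ - μ k) *
              ∑ n ∈ Finset.Icc 1 T, (if ω ∈ Dev k n then (1:ℝ) else 0)) ∂P := by
          simp only [hG]
      _ = (∫ ω, ((if ω ∈ Bev then (T:ℝ) else 0) + 3*ε*T +
            (∑ k, (muStar hK μ - μ k))) ∂P) +
          ∫ ω, (∑ k ∈ Bad hK μ ε, (muStar hK μ - μ k) *
            ∑ n ∈ Finset.Icc 1 T, (if ω ∈ Dev k n then (1:ℝ) else 0)) ∂P :=
          integral_add hABCi hDint
      _ = ((∫ ω, ((if ω ∈ Bev then (T:ℝ) else 0) + 3*ε*T) ∂P) +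
            ∫ _ω, (∑ k, (muStar hK μ - μ k)) ∂P) +
          ∫ ω, (∑ k ∈ Bad hK μ ε, (muStar hK μ - μ k) *
            ∑ n ∈ Finset.Icc 1 T, (if ω ∈ Dev k n then (1:ℝ) else 0)) ∂P := by
          rw [integral_add hABi (integrable_const _)]
      _ = (((∫ ω, (if ω ∈ Bev then (T:ℝ) else 0) ∂P) + ∫ _ω, (3*ε*T : ℝ) ∂P) +
            ∫ _ω, (∑ k, (muStar hK μ - μ k)) ∂P) +
          ∫ ω, (∑ k ∈ Bad hK μ ε, (muStar hK μ - μ k) *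
            ∑ n ∈ Finset.Icc 1 T, (if ω ∈ Dev k n then (1:ℝ) else 0)) ∂P := by
          rw [integral_add hind1 (integrable_const _)]
      _ = (P Bev).toReal * T + 3*ε*T + (∑ k, (muStar hK μ - μ k)) +
          ∑ k ∈ Bad hK μ ε, (muStar hK μ - μ k) *
            ∑ n ∈ Finset.Icc 1 T, (P (Dev k n)).toReal := by
          rw [hint1, integral_const, integral_const,
            integral_finset_sum _ fun k _ => hind3 k,
            Finset.sum_congr rfl hterm]
          simp [measure_univ]
  -- final assembly
  have hmain : ∫ ω, F ω ∂P ≤ ∫ ω, G ω ∂P := integral_mono hFint hGint hFG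
  rw [hreg]
  have hTnn : (0:ℝ) ≤ T := Nat.cast_nonneg T
  have hPBT : (P Bev).toReal * T ≤ (T:ℝ) * Real.exp (-(nOpt hK μ ε : ℝ) * ε ^ 2 / 2) := by
    rw [mul_comm]
    exact mul_le_mul_of_nonneg_left hPB hTnn
  calc ∫ ω, F ω ∂P ≤ ∫ ω, G ω ∂P := hmain
    _ = (P Bev).toReal * T + 3*ε*T + (∑ k, (muStar hK μ - μ k)) +
        ∑ k ∈ Bad hK μ ε, (muStar hK μ - μ k) *
          ∑ n ∈ Finset.Icc 1 T, (P (Dev k n)).toReal := hGval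
    _ ≤ (T : ℝ) * Real.exp (-(nOpt hK μ ε : ℝ) * ε ^ 2 / 2) + 3 * ε * T + 6 * K / ε
        + ∑ k, (muStar hK μ - μ k) := by linarith

/-- **Theorem 1 (generic bound on Greedy).** For the Greedy algorithm run on `K` arms with
1-subgaussian rewards and mean rewards in `[0,1]`, for every `ε > 0` and horizon `T`,
`R_T ≤ T·exp(-N_ε ε²/2) + 3εT + 6K/ε + ∑_k Δ_k`. -/
theorem greedy_generic_bound
    {Ω : Type*} [MeasurableSpace Ω] (P : Measure Ω) [IsProbabilityMeasure P]
    {K : ℕ} (hK : 0 < K) (T : ℕ)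
    (μ : Fin K → ℝ) (hμ : ∀ k, μ k ∈ Set.Icc (0 : ℝ) 1)
    (η : ℕ → Ω → ℝ) (hmeas : ∀ t, Measurable (η t))
    (hindep : iIndepFun η P)
    (hident : ∀ s t, IdentDistrib (η s) (η t) P P)
    (hint : ∀ t (l : ℝ), Integrable (fun ω => Real.exp (l * η t ω)) P)
    (hsubg : ∀ t (l : ℝ), ∫ ω, Real.exp (l * η t ω) ∂P ≤ Real.exp (l ^ 2 / 2))
    (ε : ℝ) (hε : 0 < ε) :
    greedyRegret P hK μ η T ≤
      (T : ℝ) * Real.exp (-(nOpt hK μ ε : ℝ) * ε ^ 2 / 2) + 3 * ε * T + 6 * K / ε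
        + ∑ k, (muStar hK μ - μ k) := by
  exact greedy_generic_bound' P hK T μ hμ η hmeas hindep hident hint hsubg ε hε
end

section
/- Consider K arms with mean rewards μ_1,…,μ_K ∈ [0,1]; for each arm k let M_{k,t} = μ_k + (1/t)·Σ_{s=1}^t η_{k,s} denote the empirical mean of its first t rewards, where {η_{k,s}} are i.i.d. 1-subgaussian random variables, independent across arms. Let μ* = max_k μ_k, fix ε > 0, and let N_ε be the number of arms k with μ* − μ_k ≤ ε. Then the probability that every ε-optimal arm k admits some t ≥ 1 with M_{k,t} < μ_k − ε is at most exp(−N_ε·ε²/2). -/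
open MeasureTheory ProbabilityTheory Real
open scoped ENNReal

noncomputable def rowSum {ι : Type*} [DecidableEq ι] (S : Finset ι) (j : ℕ → ι) (t : ℕ)
    (x : S → ℝ) : ℝ :=
  ∑ s ∈ Finset.range t, if h : j s ∈ S then x ⟨j s, h⟩ else 0

lemma measurable_rowSum {ι : Type*} [DecidableEq ι] (S : Finset ι) (j : ℕ → ι) (t : ℕ) :
    Measurable (rowSum S j t) := by
  apply Finset.measurable_sum
  intro s _
  by_cases h : j s ∈ S
  · simpa [h] using measurable_pi_apply (⟨j s, h⟩ : S)
  · simp [h]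

lemma arm_bound {Ω : Type*} [MeasurableSpace Ω] (P : Measure Ω) [IsProbabilityMeasure P]
    {K : ℕ} (η : Fin K → ℕ → Ω → ℝ) (hmeas : ∀ k s, Measurable (η k s))
    (hindep : iIndepFun (fun p : Fin K × ℕ => η p.1 p.2) P)
    (hint : ∀ k s (l : ℝ), Integrable (fun ω => Real.exp (l * η k s ω)) P)
    (hsubg : ∀ k s (l : ℝ), ∫ ω, Real.exp (l * η k s ω) ∂P ≤ Real.exp (l ^ 2 / 2))
    (ε : ℝ) (hε : 0 < ε) (k : Fin K) (n : ℕ) :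
    P {ω | ∃ t, 1 ≤ t ∧ t ≤ n ∧ ∑ s ∈ Finset.range t, η k s ω < -(t * ε)}
      ≤ ENNReal.ofReal (Real.exp (-ε ^ 2 / 2)) := by
  classical
  set Ssum : ℕ → Ω → ℝ := fun t ω => ∑ s ∈ Finset.range t, η k s ω with hSdef
  have measS : ∀ t, Measurable (Ssum t) :=
    fun t => Finset.measurable_sum _ (fun s _ => hmeas k s)
  set G : ℕ → Set Ω := fun m => {ω | ∀ u, 1 ≤ u → u ≤ m → -(u * ε) ≤ Ssum u ω} with hGdef
  set D : ℕ → Set Ω :=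
    fun t => {ω | Ssum t ω < -(t * ε) ∧ ∀ u, 1 ≤ u → u < t → -(u * ε) ≤ Ssum u ω} with hDdef
  have measG : ∀ m, MeasurableSet (G m) := by
    intro m
    have h : G m = ⋂ u, ⋂ (_ : 1 ≤ u ∧ u ≤ m), {ω | -(u * ε) ≤ Ssum u ω} := by
      ext ω; simp only [hGdef, Set.mem_setOf_eq, Set.mem_iInter]; tauto
    rw [h]
    exact MeasurableSet.iInter fun u => MeasurableSet.iInter fun _ =>
      measurableSet_le measurable_const (measS u)
  have measD : ∀ t, MeasurableSet (D t) := by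
    intro t
    have h : D t = {ω | Ssum t ω < -(t * ε)} ∩
        ⋂ u, ⋂ (_ : 1 ≤ u ∧ u < t), {ω | -(u * ε) ≤ Ssum u ω} := by
      ext ω; simp only [hDdef, Set.mem_setOf_eq, Set.mem_iInter, Set.mem_inter_iff]; tauto
    rw [h]
    exact (measurableSet_lt (measS t) measurable_const).inter
      (MeasurableSet.iInter fun u => MeasurableSet.iInter fun _ =>
        measurableSet_le measurable_const (measS u))
  set mfun : ℕ → Ω → ℝ≥0∞ :=
    fun t ω => ENNReal.ofReal (Real.exp (-ε * Ssum t ω - t * ε ^ 2 / 2)) with hmdef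
  have measm : ∀ t, Measurable (mfun t) := by
    intro t
    exact ENNReal.measurable_ofReal.comp
      ((((measS t).const_mul (-ε)).sub measurable_const).exp)
  set c : ℝ≥0∞ := ENNReal.ofReal (Real.exp (ε ^ 2 / 2)) with hcdef
  -- Key induction: stopped supermartingale bound
  have key : ∀ m : ℕ,
      c * ∑ t ∈ Finset.Icc 1 m, P (D t) + ∫⁻ ω, (G m).indicator (mfun m) ω ∂P ≤ 1 := by
    intro m
    induction m with
    | zero =>
      have hG0 : ∀ ω, (G 0).indicator (mfun 0) ω = 1 := by
        intro ω
        have hω : ω ∈ G 0 := by intro u hu1 hu2; omega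
        rw [Set.indicator_of_mem hω]
        simp [hmdef, hSdef]
      simp [hG0]
    | succ m ih =>
      -- the finset of past increments
      set Sf : Finset (Fin K × ℕ) := {k} ×ˢ Finset.range m with hSfdef
      have hrow : ∀ u, u ≤ m → ∀ ω : Ω,
          rowSum Sf (fun s => (k, s)) u (fun p : Sf => η (p : Fin K × ℕ).1 (p : Fin K × ℕ).2 ω)
            = Ssum u ω := by
        intro u hu ω
        refine Finset.sum_congr rfl fun s hs => ?_
        have hs' : ((k, s) : Fin K × ℕ) ∈ Sf :=
          Finset.mem_product.2 ⟨Finset.mem_singleton_self k,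
            Finset.mem_range.2 (lt_of_lt_of_le (Finset.mem_range.1 hs) hu)⟩
        rw [dif_pos hs']
      set φ : (Sf → ℝ) → ℝ≥0∞ := fun x =>
        Set.indicator
          {y : Sf → ℝ | ∀ u, 1 ≤ u → u ≤ m → -(u * ε) ≤ rowSum Sf (fun s => (k, s)) u y}
          (fun y => ENNReal.ofReal
            (Real.exp (-ε * rowSum Sf (fun s => (k, s)) m y - m * ε ^ 2 / 2))) x with hφdef
      have hφmeas : Measurable φ := by
        apply Measurable.indicator
        · exact ENNReal.measurable_ofReal.comp
            ((((measurable_rowSum Sf _ m).const_mul (-ε)).sub measurable_const).exp)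
        · have h : {y : Sf → ℝ | ∀ u, 1 ≤ u → u ≤ m → -(u * ε) ≤ rowSum Sf (fun s => (k, s)) u y}
              = ⋂ u, ⋂ (_ : 1 ≤ u ∧ u ≤ m),
                  {y : Sf → ℝ | -(u * ε) ≤ rowSum Sf (fun s => (k, s)) u y} := by
            ext y; simp only [Set.mem_setOf_eq, Set.mem_iInter]; tauto
          rw [h]
          exact MeasurableSet.iInter fun u => MeasurableSet.iInter fun _ =>
            measurableSet_le measurable_const (measurable_rowSum Sf _ u)
      set Tf : Finset (Fin K × ℕ) := {(k, m)} with hTfdef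
      set ψ : (Tf → ℝ) → ℝ≥0∞ := fun x =>
        ENNReal.ofReal (Real.exp (-ε * x ⟨(k, m), Finset.mem_singleton_self _⟩ - ε ^ 2 / 2))
        with hψdef
      have hψmeas : Measurable ψ :=
        ENNReal.measurable_ofReal.comp
          (Measurable.exp (by fun_prop))
      have hST : Disjoint Sf Tf := by
        simp only [Finset.disjoint_right, hTfdef, Finset.mem_singleton, hSfdef,
          Finset.mem_product, Finset.mem_range]
        rintro p rfl
        simp
      have hIF := (hindep.indepFun_finset Sf Tf hST (fun p => hmeas p.1 p.2)).comp hφmeas hψmeas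
      set gbig : Ω → ℝ≥0∞ := fun ω => ENNReal.ofReal (Real.exp (-ε * η k m ω - ε ^ 2 / 2))
        with hgdef
      have hgmeas : Measurable gbig :=
        ENNReal.measurable_ofReal.comp ((((hmeas k m).const_mul (-ε)).sub measurable_const).exp)
      have hφeq : (φ ∘ fun a (i : Sf) => η (i : Fin K × ℕ).1 (i : Fin K × ℕ).2 a)
          = fun ω => (G m).indicator (mfun m) ω := by
        funext ω
        simp only [Function.comp_apply, hφdef]
        by_cases hω : ω ∈ G m
        · have hy : (fun p : Sf => η (p : Fin K × ℕ).1 (p : Fin K × ℕ).2 ω) ∈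
              {y : Sf → ℝ | ∀ u, 1 ≤ u → u ≤ m → -(u * ε) ≤ rowSum Sf (fun s => (k, s)) u y} := by
            intro u h1 h2
            rw [hrow u h2 ω]
            exact hω u h1 h2
          rw [Set.indicator_of_mem hy, Set.indicator_of_mem hω, hrow m le_rfl ω]
        · have hy : (fun p : Sf => η (p : Fin K × ℕ).1 (p : Fin K × ℕ).2 ω) ∉
              {y : Sf → ℝ | ∀ u, 1 ≤ u → u ≤ m → -(u * ε) ≤ rowSum Sf (fun s => (k, s)) u y} := by
            intro hc
            exact hω fun u h1 h2 => by rw [← hrow u h2 ω]; exact hc u h1 h2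
          rw [Set.indicator_of_notMem hy, Set.indicator_of_notMem hω]
      have hψeq : (ψ ∘ fun a (i : Tf) => η (i : Fin K × ℕ).1 (i : Fin K × ℕ).2 a) = gbig := by
        funext ω
        simp only [Function.comp_apply, hψdef, hgdef]
      rw [hφeq, hψeq] at hIF
      -- pointwise multiplicative decomposition
      have h_mul : ∀ ω, (G m).indicator (mfun (m + 1)) ω
          = (G m).indicator (mfun m) ω * gbig ω := by
        intro ω
        by_cases hω : ω ∈ G m
        · rw [Set.indicator_of_mem hω, Set.indicator_of_mem hω]
          simp only [hmdef, hgdef]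
          rw [← ENNReal.ofReal_mul (Real.exp_nonneg _), ← Real.exp_add]
          congr 1
          have hS : Ssum (m + 1) ω = Ssum m ω + η k m ω := Finset.sum_range_succ _ _
          rw [hS]
          push_cast
          ring
        · rw [Set.indicator_of_notMem hω, Set.indicator_of_notMem hω, zero_mul]
      -- the increment factor has lintegral at most one
      have hgint : ∫⁻ ω, gbig ω ∂P ≤ 1 := by
        have heq : (fun ω => Real.exp (-ε * η k m ω - ε ^ 2 / 2))
            = fun ω => Real.exp ((-ε) * η k m ω) * Real.exp (-(ε ^ 2 / 2)) := by
          funext ω; rw [← Real.exp_add]; ring_nf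
        have hInt : Integrable (fun ω => Real.exp (-ε * η k m ω - ε ^ 2 / 2)) P := by
          rw [heq]; exact (hint k m (-ε)).mul_const _
        have h1 : ∫⁻ ω, gbig ω ∂P
            = ENNReal.ofReal (∫ ω, Real.exp (-ε * η k m ω - ε ^ 2 / 2) ∂P) :=
          (MeasureTheory.ofReal_integral_eq_lintegral_ofReal hInt
            (Filter.Eventually.of_forall fun ω => (Real.exp_pos _).le)).symm
        rw [h1]
        have h2 : ∫ ω, Real.exp (-ε * η k m ω - ε ^ 2 / 2) ∂P ≤ 1 := by
          rw [heq, integral_mul_const]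
          have h3 := hsubg k m (-ε)
          calc (∫ ω, Real.exp ((-ε) * η k m ω) ∂P) * Real.exp (-(ε ^ 2 / 2))
              ≤ Real.exp ((-ε) ^ 2 / 2) * Real.exp (-(ε ^ 2 / 2)) :=
                mul_le_mul_of_nonneg_right h3 (Real.exp_nonneg _)
            _ = 1 := by rw [← Real.exp_add]; ring_nf; exact Real.exp_zero
        calc ENNReal.ofReal (∫ ω, Real.exp (-ε * η k m ω - ε ^ 2 / 2) ∂P)
            ≤ ENNReal.ofReal 1 := ENNReal.ofReal_le_ofReal h2
          _ = 1 := ENNReal.ofReal_one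
      have hfmeas : Measurable (fun ω => (G m).indicator (mfun m) ω) :=
        (measm m).indicator (measG m)
      have h4 : ∫⁻ ω, (G m).indicator (mfun (m + 1)) ω ∂P
          ≤ ∫⁻ ω, (G m).indicator (mfun m) ω ∂P := by
        calc ∫⁻ ω, (G m).indicator (mfun (m + 1)) ω ∂P
            = ∫⁻ ω, ((fun ω => (G m).indicator (mfun m) ω) * gbig) ω ∂P :=
              lintegral_congr h_mul
          _ = (∫⁻ ω, (G m).indicator (mfun m) ω ∂P) * ∫⁻ ω, gbig ω ∂P :=
              lintegral_mul_eq_lintegral_mul_lintegral_of_indepFun hfmeas hgmeas hIF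
          _ ≤ (∫⁻ ω, (G m).indicator (mfun m) ω ∂P) * 1 := mul_le_mul_right hgint _
          _ = ∫⁻ ω, (G m).indicator (mfun m) ω ∂P := mul_one _
      -- pointwise additive decomposition
      have h_split : ∀ ω, (G m).indicator (mfun (m + 1)) ω
          = (D (m + 1)).indicator (mfun (m + 1)) ω + (G (m + 1)).indicator (mfun (m + 1)) ω := by
        intro ω
        by_cases h1 : ω ∈ D (m + 1)
        · have h1' : Ssum (m + 1) ω < -((m + 1 : ℕ) * ε) ∧
              ∀ u, 1 ≤ u → u < m + 1 → -(u * ε) ≤ Ssum u ω := h1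
          have hGm : ω ∈ G m := fun u hu1 hu2 => h1'.2 u hu1 (by omega)
          have hnG : ω ∉ G (m + 1) := by
            intro hc
            exact absurd (hc (m + 1) (by omega) le_rfl) (not_le.2 h1'.1)
          rw [Set.indicator_of_mem hGm, Set.indicator_of_mem h1,
            Set.indicator_of_notMem hnG, add_zero]
        · by_cases h2 : ω ∈ G (m + 1)
          · have hGm : ω ∈ G m := fun u hu1 hu2 => h2 u hu1 (by omega)
            rw [Set.indicator_of_mem hGm, Set.indicator_of_notMem h1,
              Set.indicator_of_mem h2, zero_add]
          · have hnGm : ω ∉ G m := by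
              intro hc
              apply h1
              have hS : Ssum (m + 1) ω < -((m + 1 : ℕ) * ε) := by
                by_contra hge
                apply h2
                intro u hu1 hu2
                rcases Nat.lt_or_ge u (m + 1) with h | h
                · exact hc u hu1 (by omega)
                · have hu : u = m + 1 := by omega
                  subst hu
                  exact not_lt.1 hge
              exact ⟨hS, fun u hu1 hu2 => hc u hu1 (by omega)⟩
            rw [Set.indicator_of_notMem hnGm, Set.indicator_of_notMem h1,
              Set.indicator_of_notMem h2, add_zero]
      have hadd : ∫⁻ ω, (D (m + 1)).indicator (mfun (m + 1)) ω ∂P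
          + ∫⁻ ω, (G (m + 1)).indicator (mfun (m + 1)) ω ∂P
          = ∫⁻ ω, (G m).indicator (mfun (m + 1)) ω ∂P := by
        rw [← lintegral_add_left ((measm (m + 1)).indicator (measD (m + 1)))]
        exact lintegral_congr fun ω => (h_split ω).symm
      -- lower bound on the D-part
      have h3 : c * P (D (m + 1)) ≤ ∫⁻ ω, (D (m + 1)).indicator (mfun (m + 1)) ω ∂P := by
        have hpt : ∀ ω, (D (m + 1)).indicator (fun _ => c) ω
            ≤ (D (m + 1)).indicator (mfun (m + 1)) ω := by
          intro ω
          by_cases hω : ω ∈ D (m + 1)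
          · rw [Set.indicator_of_mem hω, Set.indicator_of_mem hω]
            have hS : Ssum (m + 1) ω < -((m + 1 : ℕ) * ε) := hω.1
            simp only [hcdef, hmdef]
            apply ENNReal.ofReal_le_ofReal
            apply Real.exp_le_exp.2
            push_cast at hS ⊢
            nlinarith [sq_nonneg ε, hε]
          · rw [Set.indicator_of_notMem hω, Set.indicator_of_notMem hω]
        calc c * P (D (m + 1))
            = ∫⁻ ω, (D (m + 1)).indicator (fun _ => c) ω ∂P :=
              (lintegral_indicator_const (measD _) c).symm
          _ ≤ _ := lintegral_mono hpt
      -- assemble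
      have hins : Finset.Icc 1 (m + 1) = insert (m + 1) (Finset.Icc 1 m) := by
        ext x; simp only [Finset.mem_Icc, Finset.mem_insert]; omega
      have hsum : ∑ t ∈ Finset.Icc 1 (m + 1), P (D t)
          = P (D (m + 1)) + ∑ t ∈ Finset.Icc 1 m, P (D t) := by
        rw [hins, Finset.sum_insert (by simp [Finset.mem_Icc])]
      calc c * ∑ t ∈ Finset.Icc 1 (m + 1), P (D t)
            + ∫⁻ ω, (G (m + 1)).indicator (mfun (m + 1)) ω ∂P
          = c * ∑ t ∈ Finset.Icc 1 m, P (D t)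
            + (c * P (D (m + 1)) + ∫⁻ ω, (G (m + 1)).indicator (mfun (m + 1)) ω ∂P) := by
            rw [hsum, mul_add]; ring
        _ ≤ c * ∑ t ∈ Finset.Icc 1 m, P (D t)
            + (∫⁻ ω, (D (m + 1)).indicator (mfun (m + 1)) ω ∂P
              + ∫⁻ ω, (G (m + 1)).indicator (mfun (m + 1)) ω ∂P) :=
            add_le_add_right (add_le_add_left h3 _) _
        _ = c * ∑ t ∈ Finset.Icc 1 m, P (D t)
            + ∫⁻ ω, (G m).indicator (mfun (m + 1)) ω ∂P := by rw [hadd]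
        _ ≤ c * ∑ t ∈ Finset.Icc 1 m, P (D t)
            + ∫⁻ ω, (G m).indicator (mfun m) ω ∂P := add_le_add_right h4 _
        _ ≤ 1 := ih
  -- conclude
  have hsub : {ω | ∃ t, 1 ≤ t ∧ t ≤ n ∧ Ssum t ω < -(t * ε)} ⊆ ⋃ t ∈ Finset.Icc 1 n, D t := by
    rintro ω ⟨t, ht1, ht2, hlt⟩
    have hex : ∃ t, 1 ≤ t ∧ Ssum t ω < -(t * ε) := ⟨t, ht1, hlt⟩
    have hT1 := (Nat.find_spec hex).1
    have hT2 := (Nat.find_spec hex).2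
    refine Set.mem_biUnion (Finset.mem_Icc.2
      ⟨hT1, le_trans (Nat.find_min' hex ⟨ht1, hlt⟩) ht2⟩) ?_
    refine ⟨hT2, fun u hu1 hu2 => ?_⟩
    by_contra hlt'
    exact Nat.find_min hex hu2 ⟨hu1, not_le.1 hlt'⟩
  have h5 : P {ω | ∃ t, 1 ≤ t ∧ t ≤ n ∧ Ssum t ω < -(t * ε)}
      ≤ ∑ t ∈ Finset.Icc 1 n, P (D t) :=
    (measure_mono hsub).trans (measure_biUnion_finset_le _ _)
  have h6 : c * P {ω | ∃ t, 1 ≤ t ∧ t ≤ n ∧ Ssum t ω < -(t * ε)} ≤ 1 :=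
    le_trans (mul_le_mul_right h5 c) (le_trans le_self_add (key n))
  have hcinv : ENNReal.ofReal (Real.exp (-ε ^ 2 / 2)) = c⁻¹ := by
    rw [hcdef, ← ENNReal.ofReal_inv_of_pos (Real.exp_pos _), ← Real.exp_neg]
    congr 1
    ring
  rw [hcinv]
  exact ENNReal.le_inv_iff_mul_le.2 (by rwa [mul_comm] at h6)

lemma measurableSet_eSet {ι : Type*} [DecidableEq ι] (S : Finset ι) (j : ℕ → ι) (n : ℕ) (ε : ℝ) :
    MeasurableSet {x : S → ℝ | ∃ t, 1 ≤ t ∧ t ≤ n ∧ rowSum S j t x < -(t * ε)} := by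
  have h : {x : S → ℝ | ∃ t, 1 ≤ t ∧ t ≤ n ∧ rowSum S j t x < -(t * ε)}
      = ⋃ t, ⋃ (_ : 1 ≤ t ∧ t ≤ n), {x : S → ℝ | rowSum S j t x < -(t * ε)} := by
    ext x; simp only [Set.mem_setOf_eq, Set.mem_iUnion]; tauto
  rw [h]
  exact MeasurableSet.iUnion fun t => MeasurableSet.iUnion fun _ =>
    measurableSet_lt (measurable_rowSum S j t) measurable_const

lemma prod_events {Ω : Type*} [MeasurableSpace Ω] (P : Measure Ω) [IsProbabilityMeasure P]
    {K : ℕ} (η : Fin K → ℕ → Ω → ℝ) (hmeas : ∀ k s, Measurable (η k s))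
    (hindep : iIndepFun (fun p : Fin K × ℕ => η p.1 p.2) P)
    (ε : ℝ) (n : ℕ) (F : Finset (Fin K)) :
    P (⋂ k ∈ F, {ω | ∃ t, 1 ≤ t ∧ t ≤ n ∧ ∑ s ∈ Finset.range t, η k s ω < -(t * ε)})
      = ∏ k ∈ F, P {ω | ∃ t, 1 ≤ t ∧ t ≤ n ∧ ∑ s ∈ Finset.range t, η k s ω < -(t * ε)} := by
  classical
  induction F using Finset.induction_on with
  | empty => simp
  | insert _ _ ha ih =>
    rename_i a F
    rw [Finset.set_biInter_insert, Finset.prod_insert ha, ← ih]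
    set Sf : Finset (Fin K × ℕ) := {a} ×ˢ Finset.range n with hSfdef
    set Tf : Finset (Fin K × ℕ) := F ×ˢ Finset.range n with hTfdef
    have hST : Disjoint Sf Tf := by
      rw [Finset.disjoint_left]
      intro p hp hp'
      rw [hSfdef, Finset.mem_product, Finset.mem_singleton] at hp
      rw [hTfdef, Finset.mem_product] at hp'
      exact ha (hp.1 ▸ hp'.1)
    have hIF := hindep.indepFun_finset Sf Tf hST (fun p => hmeas p.1 p.2)
    set A' : Set (Sf → ℝ) :=
      {x | ∃ t, 1 ≤ t ∧ t ≤ n ∧ rowSum Sf (fun s => (a, s)) t x < -(t * ε)} with hA'def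
    set B' : Set (Tf → ℝ) :=
      ⋂ k ∈ F, {x | ∃ t, 1 ≤ t ∧ t ≤ n ∧ rowSum Tf (fun s => (k, s)) t x < -(t * ε)} with hB'def
    have hmeasA : MeasurableSet A' := measurableSet_eSet Sf _ n ε
    have hmeasB : MeasurableSet B' :=
      MeasurableSet.biInter (Set.to_countable _) fun k _ => measurableSet_eSet Tf _ n ε
    have hApre : (fun ω (i : Sf) => η (i : Fin K × ℕ).1 (i : Fin K × ℕ).2 ω) ⁻¹' A'
        = {ω | ∃ t, 1 ≤ t ∧ t ≤ n ∧ ∑ s ∈ Finset.range t, η a s ω < -(t * ε)} := by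
      ext ω
      simp only [Set.mem_preimage, hA'def, Set.mem_setOf_eq]
      refine exists_congr fun t => and_congr_right fun ht1 => and_congr_right fun ht2 => ?_
      have hr : rowSum Sf (fun s => (a, s)) t (fun i : Sf => η (i : Fin K × ℕ).1 (i : Fin K × ℕ).2 ω)
          = ∑ s ∈ Finset.range t, η a s ω := by
        refine Finset.sum_congr rfl fun s hs => ?_
        have hs' : ((a, s) : Fin K × ℕ) ∈ Sf :=
          Finset.mem_product.2 ⟨Finset.mem_singleton_self a,
            Finset.mem_range.2 (lt_of_lt_of_le (Finset.mem_range.1 hs) ht2)⟩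
        rw [dif_pos hs']
      rw [hr]
    have hBpre : (fun ω (i : Tf) => η (i : Fin K × ℕ).1 (i : Fin K × ℕ).2 ω) ⁻¹' B'
        = ⋂ k ∈ F, {ω | ∃ t, 1 ≤ t ∧ t ≤ n ∧ ∑ s ∈ Finset.range t, η k s ω < -(t * ε)} := by
      ext ω
      simp only [Set.mem_preimage, hB'def, Set.mem_iInter, Set.mem_setOf_eq]
      refine forall_congr' fun k => forall_congr' fun hk => ?_
      refine exists_congr fun t => and_congr_right fun ht1 => and_congr_right fun ht2 => ?_
      have hr : rowSum Tf (fun s => (k, s)) t (fun i : Tf => η (i : Fin K × ℕ).1 (i : Fin K × ℕ).2 ω)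
          = ∑ s ∈ Finset.range t, η k s ω := by
        refine Finset.sum_congr rfl fun s hs => ?_
        have hs' : ((k, s) : Fin K × ℕ) ∈ Tf :=
          Finset.mem_product.2 ⟨hk,
            Finset.mem_range.2 (lt_of_lt_of_le (Finset.mem_range.1 hs) ht2)⟩
        rw [dif_pos hs']
      rw [hr]
    have := hIF.measure_inter_preimage_eq_mul A' B' hmeasA hmeasB
    rw [hApre, hBpre] at this
    exact this


/-- **Bound on the bad event.** Consider `K` arms with mean rewards `μ_k ∈ [0,1]` and, for each
arm `k`, empirical means `M_{k,t} = μ_k + (1/t)·∑_{s=1}^t η_{k,s}` where the `η_{k,s}` are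
i.i.d. mean-zero 1-subgaussian, independent across arms. For `ε > 0`, the probability that
every `ε`-optimal arm `k` admits some `t ≥ 1` with `M_{k,t} < μ_k - ε` is at most
`exp(-N_ε·ε²/2)`, where `N_ε` is the number of `ε`-optimal arms. -/
theorem prob_all_eps_optimal_underestimated
    {Ω : Type*} [MeasurableSpace Ω] (P : Measure Ω) [IsProbabilityMeasure P]
    {K : ℕ} (hK : 0 < K)
    (μ : Fin K → ℝ) (hμ : ∀ k, μ k ∈ Set.Icc (0 : ℝ) 1)
    (μstar : ℝ) (hμstar : μstar = Finset.univ.sup' ⟨⟨0, hK⟩, Finset.mem_univ _⟩ μ)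
    (η : Fin K → ℕ → Ω → ℝ) (hmeas : ∀ k s, Measurable (η k s))
    (hindep : iIndepFun (fun p : Fin K × ℕ => η p.1 p.2) P)
    (hident : ∀ p q : Fin K × ℕ, IdentDistrib (η p.1 p.2) (η q.1 q.2) P P)
    (hmean : ∀ k s, ∫ ω, η k s ω ∂P = 0)
    (hint : ∀ k s (l : ℝ), Integrable (fun ω => Real.exp (l * η k s ω)) P)
    (hsubg : ∀ k s (l : ℝ), ∫ ω, Real.exp (l * η k s ω) ∂P ≤ Real.exp (l ^ 2 / 2))
    (ε : ℝ) (hε : 0 < ε)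
    (Nε : ℕ) (hNε : Nε = (Finset.univ.filter fun k => μstar - μ k ≤ ε).card) :
    P {ω | ∀ k : Fin K, μstar - μ k ≤ ε →
        ∃ t : ℕ, 1 ≤ t ∧ μ k + (1 / (t : ℝ)) * ∑ s ∈ Finset.range t, η k s ω < μ k - ε}
      ≤ ENNReal.ofReal (Real.exp (-(Nε : ℝ) * ε ^ 2 / 2)) := by
  classical
  set Fε : Finset (Fin K) := Finset.univ.filter (fun k => μstar - μ k ≤ ε) with hFdef
  set C : ℕ → Set Ω := fun n =>
    ⋂ k ∈ Fε, {ω | ∃ t, 1 ≤ t ∧ t ≤ n ∧ ∑ s ∈ Finset.range t, η k s ω < -(t * ε)} with hCdef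
  have hmono : Monotone C := by
    intro n n' hn
    refine Set.iInter₂_mono fun k hk => ?_
    rintro ω ⟨t, h1, h2, h3⟩
    exact ⟨t, h1, h2.trans hn, h3⟩
  have hsub : {ω | ∀ k : Fin K, μstar - μ k ≤ ε →
      ∃ t : ℕ, 1 ≤ t ∧ μ k + (1 / (t : ℝ)) * ∑ s ∈ Finset.range t, η k s ω < μ k - ε}
      ⊆ ⋃ n, C n := by
    intro ω hω
    have key : ∀ k : Fin K, ∃ t : ℕ, 1 ≤ t ∧
        (k ∈ Fε → ∑ s ∈ Finset.range t, η k s ω < -(t * ε)) := by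
      intro k
      by_cases hk : k ∈ Fε
      · have hk' : μstar - μ k ≤ ε := (Finset.mem_filter.1 hk).2
        obtain ⟨t, ht1, hlt⟩ := hω k hk'
        refine ⟨t, ht1, fun _ => ?_⟩
        have htpos : (0:ℝ) < t := by
          have : 0 < t := ht1
          exact_mod_cast this
        have h1 : (1 / (t:ℝ)) * ∑ s ∈ Finset.range t, η k s ω < -ε := by linarith
        have h3 := mul_lt_mul_of_pos_left h1 htpos
        have h4 : (t:ℝ) * ((1 / (t:ℝ)) * ∑ s ∈ Finset.range t, η k s ω)
            = ∑ s ∈ Finset.range t, η k s ω := by field_simp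
        rw [h4] at h3
        calc ∑ s ∈ Finset.range t, η k s ω < (t:ℝ) * (-ε) := h3
          _ = -((t:ℝ) * ε) := by ring
      · exact ⟨1, le_rfl, fun h => absurd h hk⟩
    choose f hf1 hf2 using key
    refine Set.mem_iUnion.2 ⟨Finset.univ.sup f, Set.mem_iInter₂.2 fun k hk => ?_⟩
    exact ⟨f k, hf1 k, Finset.le_sup (Finset.mem_univ k), hf2 k hk⟩
  calc P {ω | ∀ k : Fin K, μstar - μ k ≤ ε →
        ∃ t : ℕ, 1 ≤ t ∧ μ k + (1 / (t : ℝ)) * ∑ s ∈ Finset.range t, η k s ω < μ k - ε}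
      ≤ P (⋃ n, C n) := measure_mono hsub
    _ = ⨆ n, P (C n) := hmono.directed_le.measure_iUnion
    _ ≤ ENNReal.ofReal (Real.exp (-(Nε : ℝ) * ε ^ 2 / 2)) := by
      refine iSup_le fun n => ?_
      rw [hCdef]
      rw [prod_events P η hmeas hindep ε n Fε]
      calc ∏ k ∈ Fε, P {ω | ∃ t, 1 ≤ t ∧ t ≤ n ∧ ∑ s ∈ Finset.range t, η k s ω < -(t * ε)}
          ≤ ∏ _k ∈ Fε, ENNReal.ofReal (Real.exp (-ε ^ 2 / 2)) :=
            Finset.prod_le_prod' fun k _ =>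
              arm_bound P η hmeas hindep hint hsubg ε hε k n
        _ = (ENNReal.ofReal (Real.exp (-ε ^ 2 / 2))) ^ Fε.card := Finset.prod_const _
        _ = ENNReal.ofReal ((Real.exp (-ε ^ 2 / 2)) ^ Fε.card) :=
            (ENNReal.ofReal_pow (Real.exp_nonneg _) _).symm
        _ = ENNReal.ofReal (Real.exp (-(Nε : ℝ) * ε ^ 2 / 2)) := by
            rw [← Real.exp_nat_mul]
            congr 1
            rw [hNε]
            push_cast
            ring
end
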